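/- arXiv:2503.04226 — 10 statements merged into one kernel-verified Lean document; each statement's English description precedes it below -/
import Mathlib

section
/- Let X, Y be real normed spaces, A : X → Y continuous linear, D ⊆ Y a nonempty closed convex set, and B := A⁻¹(D) nonempty. Then the weak-* closure of the set Λ + ({0} × ℝ≥0), where Λ := {(A*λ, σ_D(λ)) : λ ∈ Y*, σ_D(λ) < ∞} ⊆ X* × ℝ, equals the epigraph of the support function σ_B of B. -/
open Pointwise
set_option maxHeartbeats 1000000

/-- The strong dual element viewed in the weak-* dual. -/
def toWeakDual {X : Type*} [NormedAddCommGroup X] [NormedSpace ℝ X]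
    (f : X →L[ℝ] ℝ) : WeakDual ℝ X := f

instance {X : Type*} [NormedAddCommGroup X] [NormedSpace ℝ X] :
    LocallyConvexSpace ℝ (WeakDual ℝ X) :=
  WeakBilin.locallyConvexSpace (B := topDualPairing ℝ X)

lemma weakDual_dual_eval {X : Type*} [NormedAddCommGroup X] [NormedSpace ℝ X]
    (f : WeakDual ℝ X →L[ℝ] ℝ) : ∃ x : X, ∀ φ : WeakDual ℝ X, f φ = φ x := by
  haveI : Nonempty X := ⟨0⟩
  have hp := (topDualPairing ℝ X).weakBilin_withSeminorms
  have hq : Continuous fun φ : WeakDual ℝ X => ‖f φ‖ := f.continuous.norm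
  obtain ⟨s, C, -, hC⟩ := Seminorm.bound_of_continuous hp
    ((normSeminorm ℝ ℝ).comp (f : WeakDual ℝ X →ₗ[ℝ] ℝ)) hq
  set L : s → WeakDual ℝ X →ₗ[ℝ] ℝ := fun i => (topDualPairing ℝ X).flip (i : X) with hL
  have hker : ⨅ i, LinearMap.ker (L i) ≤ LinearMap.ker (f : WeakDual ℝ X →ₗ[ℝ] ℝ) := by
    intro φ hφ
    simp only [Submodule.mem_iInf, LinearMap.mem_ker] at hφ
    have h0 : (s.sup (topDualPairing ℝ X).toSeminormFamily) φ ≤ 0 := by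
      apply Seminorm.finset_sup_apply_le le_rfl
      intro i hi
      have h2 : topDualPairing ℝ X φ i = 0 := hφ ⟨i, hi⟩
      change ‖(topDualPairing ℝ X) φ i‖ ≤ 0
      rw [h2, norm_zero]
    have h1 := hC φ
    simp only [Seminorm.comp_apply, Seminorm.smul_apply] at h1
    have h3 : ‖f φ‖ ≤ 0 := le_trans h1 (by
      have : (C : ℝ) • (s.sup (topDualPairing ℝ X).toSeminormFamily) φ ≤ 0 :=
        mul_nonpos_of_nonneg_of_nonpos C.coe_nonneg h0
      exact this)
    simpa using le_antisymm h3 (norm_nonneg _)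
  have hmem := mem_span_of_iInf_ker_le_ker hker
  obtain ⟨c, hc⟩ := (Submodule.mem_span_range_iff_exists_fun ℝ).1 hmem
  refine ⟨∑ i, c i • (i : X), fun φ => ?_⟩
  have := congrArg (fun g : WeakDual ℝ X →ₗ[ℝ] ℝ => g φ) hc
  simp only [LinearMap.coe_sum, Finset.sum_apply, LinearMap.smul_apply] at this
  rw [show f φ = (f : WeakDual ℝ X →ₗ[ℝ] ℝ) φ from rfl, ← this]
  rw [map_sum]
  refine Finset.sum_congr rfl fun i _ => ?_
  rw [map_smul]
  rfl

/-- Separation of a point from a nonempty closed convex set, in support-function form. -/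
lemma exists_bdd_lt {Y : Type*} [NormedAddCommGroup Y] [NormedSpace ℝ Y] {D : Set Y}
    (hDne : D.Nonempty) (hDcl : IsClosed D) (hDconv : Convex ℝ D) {y : Y} (hy : y ∉ D) :
    ∃ l : Y →L[ℝ] ℝ, BddAbove ((fun d => l d) '' D) ∧ sSup ((fun d => l d) '' D) < l y := by
  obtain ⟨l, u, hlt, hu⟩ := geometric_hahn_banach_closed_point hDconv hDcl hy
  have hbdd : BddAbove ((fun d => l d) '' D) := ⟨u, by rintro _ ⟨d, hd, rfl⟩; exact (hlt d hd).le⟩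
  refine ⟨l, hbdd, lt_of_le_of_lt (csSup_le (hDne.image _) ?_) hu⟩
  rintro _ ⟨d, hd, rfl⟩; exact (hlt d hd).le

lemma image_smul_fun {Y : Type*} [NormedAddCommGroup Y] [NormedSpace ℝ Y]
    (l : Y →L[ℝ] ℝ) (D : Set Y) (t : ℝ) :
    (fun y => (t • l) y) '' D = t • ((fun y => l y) '' D) := by
  rw [← Set.image_smul, Set.image_image]
  rfl

/-- Lemma 1 of the paper: for `D` nonempty closed convex and `B := A⁻¹(D)` nonempty,
the weak-* closure of `Λ + ({0} × ℝ≥0)`, where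
`Λ = {(A*λ, σ_D(λ)) : λ in the barrier cone of D}`, equals `epi σ_B`. -/
theorem wclosure_Lambda_eq_epi_support {X Y : Type*}
    [NormedAddCommGroup X] [NormedSpace ℝ X] [NormedAddCommGroup Y] [NormedSpace ℝ Y]
    (A : X →L[ℝ] Y) (D : Set Y) (hDne : D.Nonempty) (hDcl : IsClosed D) (hDconv : Convex ℝ D)
    (hBne : (A ⁻¹' D).Nonempty) :
    closure
        ({p : WeakDual ℝ X × ℝ | ∃ l : Y →L[ℝ] ℝ, BddAbove ((fun y => l y) '' D) ∧
            p = (toWeakDual (l.comp A), sSup ((fun y => l y) '' D))}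
          + ({0} ×ˢ Set.Ici (0 : ℝ)))
      = {p : WeakDual ℝ X × ℝ | ∀ x ∈ A ⁻¹' D, p.1 x ≤ p.2} := by
  set Λ : Set (WeakDual ℝ X × ℝ) := {p : WeakDual ℝ X × ℝ | ∃ l : Y →L[ℝ] ℝ,
      BddAbove ((fun y => l y) '' D) ∧
      p = (toWeakDual (l.comp A), sSup ((fun y => l y) '' D))} with hΛ
  set Cn : Set (WeakDual ℝ X × ℝ) := Λ + ({0} ×ˢ Set.Ici (0 : ℝ)) with hCn
  -- membership builder
  have hCmem : ∀ (l : Y →L[ℝ] ℝ) (t : ℝ), BddAbove ((fun y => l y) '' D) → 0 ≤ t →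
      (toWeakDual (l.comp A), sSup ((fun y => l y) '' D) + t) ∈ Cn := by
    intro l t hb ht
    rw [hCn, Set.mem_add]
    exact ⟨(toWeakDual (l.comp A), sSup ((fun y => l y) '' D)), ⟨l, hb, rfl⟩,
      ((0 : WeakDual ℝ X), t), Set.mem_prod.2 ⟨rfl, ht⟩, Prod.ext (add_zero _) rfl⟩
  -- the epigraph is closed
  have hE : IsClosed {p : WeakDual ℝ X × ℝ | ∀ x ∈ A ⁻¹' D, p.1 x ≤ p.2} := by
    have heq : {p : WeakDual ℝ X × ℝ | ∀ x ∈ A ⁻¹' D, p.1 x ≤ p.2}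
        = ⋂ x ∈ A ⁻¹' D, {p : WeakDual ℝ X × ℝ | p.1 x ≤ p.2} := by
      ext p; simp
    rw [heq]
    refine isClosed_biInter fun x _ => isClosed_le ?_ continuous_snd
    exact (WeakDual.eval_continuous x).comp continuous_fst
  -- Cn ⊆ epigraph
  have hCE : Cn ⊆ {p : WeakDual ℝ X × ℝ | ∀ x ∈ A ⁻¹' D, p.1 x ≤ p.2} := by
    intro p hpmem
    rw [hCn, Set.mem_add] at hpmem
    obtain ⟨a1, ⟨l, hb, rfl⟩, z, hz, rfl⟩ := hpmem
    rw [Set.mem_prod] at hz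
    intro x hx
    have hz1 : z.1 = 0 := hz.1
    have hz2 : (0:ℝ) ≤ z.2 := hz.2
    show (toWeakDual (l.comp A) + z.1) x ≤ sSup ((fun y => l y) '' D) + z.2
    rw [hz1, add_zero]
    have : l (A x) ≤ sSup ((fun y => l y) '' D) := le_csSup hb ⟨A x, hx, rfl⟩
    have happ : (toWeakDual (l.comp A)) x = l (A x) := rfl
    rw [happ]; linarith
  -- convexity of Cn
  have hCconv : Convex ℝ Cn := by
    rintro p hpm q hqm a b ha hb hab
    rw [hCn, Set.mem_add] at hpm hqm ⊢
    obtain ⟨a1, ⟨l1, hbd1, rfl⟩, z1, hz1, hs1⟩ := hpm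
    obtain ⟨a2, ⟨l2, hbd2, rfl⟩, z2, hz2, hs2⟩ := hqm
    rw [Set.mem_prod] at hz1 hz2
    set σ1 := sSup ((fun y => l1 y) '' D) with hσ1
    set σ2 := sSup ((fun y => l2 y) '' D) with hσ2
    set l := a • l1 + b • l2 with hl
    have hbound : ∀ d ∈ D, l d ≤ a * σ1 + b * σ2 := by
      intro d hd
      have h1 : l1 d ≤ σ1 := le_csSup hbd1 ⟨d, hd, rfl⟩
      have h2 : l2 d ≤ σ2 := le_csSup hbd2 ⟨d, hd, rfl⟩
      have : l d = a * l1 d + b * l2 d := rfl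
      rw [this]
      have := mul_le_mul_of_nonneg_left h1 ha
      have := mul_le_mul_of_nonneg_left h2 hb
      linarith
    have hbdd : BddAbove ((fun y => l y) '' D) :=
      ⟨a * σ1 + b * σ2, by rintro _ ⟨d, hd, rfl⟩; exact hbound d hd⟩
    set σ := sSup ((fun y => l y) '' D) with hσ
    have hσle : σ ≤ a * σ1 + b * σ2 :=
      csSup_le (hDne.image _) (by rintro _ ⟨d, hd, rfl⟩; exact hbound d hd)
    have hp1 : p.1 = toWeakDual (l1.comp A) := by
      rw [← hs1]; show toWeakDual (l1.comp A) + z1.1 = _; rw [hz1.1, add_zero]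
    have hp2 : p.2 = σ1 + z1.2 := by rw [← hs1]; rfl
    have hq1 : q.1 = toWeakDual (l2.comp A) := by
      rw [← hs2]; show toWeakDual (l2.comp A) + z2.1 = _; rw [hz2.1, add_zero]
    have hq2 : q.2 = σ2 + z2.2 := by rw [← hs2]; rfl
    have hσle2 : σ ≤ a * p.2 + b * q.2 := by
      rw [hp2, hq2]
      have hz12 : (0:ℝ) ≤ z1.2 := hz1.2
      have hz22 : (0:ℝ) ≤ z2.2 := hz2.2
      have := mul_le_mul_of_nonneg_left hz12 ha
      have := mul_le_mul_of_nonneg_left hz22 hb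
      nlinarith
    refine ⟨(toWeakDual (l.comp A), σ), ⟨l, hbdd, rfl⟩,
      ((0 : WeakDual ℝ X), a * p.2 + b * q.2 - σ),
      Set.mem_prod.2 ⟨rfl, by simpa using hσle2⟩, ?_⟩
    have hfst : toWeakDual (l.comp A) + 0 = (a • p + b • q).1 := by
      show toWeakDual (l.comp A) + 0 = a • p.1 + b • q.1
      rw [hp1, hq1]
      apply DFunLike.ext
      intro x
      show (a • l1 + b • l2) (A x) + (0 : WeakDual ℝ X) x
        = a * (l1 (A x)) + b * (l2 (A x))
      have : (a • l1 + b • l2) (A x) = a * l1 (A x) + b * l2 (A x) := rfl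
      rw [this]
      show _ + (0:ℝ) = _
      ring
    have hsnd : σ + (a * p.2 + b * q.2 - σ) = (a • p + b • q).2 := by
      show _ = a * p.2 + b * q.2
      ring
    exact Prod.ext hfst hsnd
  apply subset_antisymm (closure_minimal hCE hE)
  -- hard direction
  intro p hp
  by_contra hout
  obtain ⟨f, u, hfu, hupf⟩ := geometric_hahn_banach_closed_point hCconv.closure
    isClosed_closure hout
  obtain ⟨x0, hx0⟩ := weakDual_dual_eval (f.comp (ContinuousLinearMap.inl ℝ (WeakDual ℝ X) ℝ))
  set c := f (0, 1) with hcdef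
  have hdec : ∀ (φ : WeakDual ℝ X) (t : ℝ), f (φ, t) = φ x0 + t * c := by
    intro φ t
    have h1 : (φ, t) = ((φ, 0) : WeakDual ℝ X × ℝ) + t • (((0 : WeakDual ℝ X), (1:ℝ))) := by
      simp [Prod.ext_iff]
    rw [h1, map_add, map_smul]
    have h2 : f (φ, 0) = φ x0 := hx0 φ
    rw [h2]
    simp [smul_eq_mul, hcdef]
  have h0bdd : BddAbove ((fun y => (0 : Y →L[ℝ] ℝ) y) '' D) := by
    refine ⟨0, ?_⟩; rintro _ ⟨d, hd, rfl⟩; simp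
  have h0sSup : sSup ((fun y => (0 : Y →L[ℝ] ℝ) y) '' D) = 0 := by
    have : (fun y => (0 : Y →L[ℝ] ℝ) y) '' D = {0} := by
      have := hDne.image_const (0:ℝ)
      simpa using this
    rw [this, csSup_singleton]
  have hkey : ∀ l : Y →L[ℝ] ℝ, BddAbove ((fun y => l y) '' D) →
      l (A x0) + sSup ((fun y => l y) '' D) * c < u := by
    intro l hb
    have hmem := hCmem l 0 hb le_rfl
    rw [add_zero] at hmem
    have := hfu _ (subset_closure hmem)
    rw [hdec] at this
    exact this
  have htc : ∀ t : ℝ, 0 ≤ t → t * c < u := by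
    intro t ht
    have hmem := hCmem 0 t h0bdd ht
    have := hfu _ (subset_closure hmem)
    rw [hdec] at this
    have h00 : (toWeakDual ((0 : Y →L[ℝ] ℝ).comp A)) x0 = 0 := by
      show ((0 : Y →L[ℝ] ℝ).comp A) x0 = 0; simp
    rw [h00, h0sSup, zero_add, zero_add] at this
    exact this
  have hu0 : 0 < u := by have := htc 0 le_rfl; simpa using this
  have hcle : c ≤ 0 := by
    by_contra h
    push_neg at h
    have h2 := htc ((u + 1) / c) (by positivity)
    rw [div_mul_cancel₀ _ h.ne'] at h2
    linarith
  have hscale : ∀ l : Y →L[ℝ] ℝ, BddAbove ((fun y => l y) '' D) →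
      l (A x0) + sSup ((fun y => l y) '' D) * c ≤ 0 := by
    intro l hb
    by_contra h
    push_neg at h
    set e := l (A x0) + sSup ((fun y => l y) '' D) * c with he
    set t := (u + 1) / e with htdef
    have ht : 0 < t := by positivity
    have himg : (fun y => (t • l) y) '' D = t • ((fun y => l y) '' D) := image_smul_fun l D t
    have hb' : BddAbove ((fun y => (t • l) y) '' D) := by
      rw [himg]
      exact BddAbove.smul_of_nonneg hb ht.le
    have hsS : sSup ((fun y => (t • l) y) '' D) = t * sSup ((fun y => l y) '' D) := by
      rw [himg, Real.sSup_smul_of_nonneg ht.le, smul_eq_mul]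
    have hk := hkey (t • l) hb'
    rw [hsS] at hk
    have happ : (t • l) (A x0) = t * l (A x0) := rfl
    rw [happ] at hk
    have : t * e = u + 1 := by rw [htdef]; field_simp
    nlinarith
  rcases hcle.lt_or_eq with hlt | heq
  · -- c < 0
    have hposc : 0 < -c := by linarith
    set x1 := (-c)⁻¹ • x0 with hx1def
    have hAx1 : A x1 ∈ D := by
      by_contra hnotin
      obtain ⟨l, hb, hsep⟩ := exists_bdd_lt hDne hDcl hDconv hnotin
      have h1 := hscale l hb
      have h2 : l (A x1) = (-c)⁻¹ * l (A x0) := by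
        rw [hx1def, map_smul, map_smul, smul_eq_mul]
      have h3 : l (A x0) ≤ sSup ((fun d => l d) '' D) * (-c) := by nlinarith
      have h4 : (-c)⁻¹ * l (A x0) ≤ sSup ((fun d => l d) '' D) := by
        exact (inv_mul_le_iff₀' hposc).2 h3
      rw [h2] at hsep
      linarith
    have hle := hp x1 hAx1
    have hps : p.1 x1 = (-c)⁻¹ * p.1 x0 := by
      rw [hx1def, map_smul, smul_eq_mul]
    rw [hps] at hle
    have h3 : p.1 x0 ≤ p.2 * (-c) := by
      have := mul_le_mul_of_nonneg_left hle hposc.le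
      rwa [← mul_assoc, mul_inv_cancel₀ hposc.ne', one_mul, mul_comm (-c) p.2] at this
    have hfp : f p = p.1 x0 + p.2 * c := by
      have := hdec p.1 p.2
      rwa [Prod.mk.eta] at this
    rw [hfp] at hupf
    nlinarith
  · -- c = 0
    have hneg : ∀ l : Y →L[ℝ] ℝ, BddAbove ((fun y => l y) '' D) → l (A x0) ≤ 0 := by
      intro l hb
      have := hscale l hb
      rw [heq] at this
      simpa using this
    obtain ⟨b0, hb0B⟩ := hBne
    have hline : ∀ t : ℝ, 0 ≤ t → b0 + t • x0 ∈ A ⁻¹' D := by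
      intro t ht
      by_contra hno
      obtain ⟨l, hb', hsep⟩ := exists_bdd_lt hDne hDcl hDconv hno
      have h1 : l (A (b0 + t • x0)) = l (A b0) + t * l (A x0) := by
        rw [map_add, map_add, map_smul, map_smul, smul_eq_mul]
      have h2 : l (A b0) ≤ sSup ((fun d => l d) '' D) := le_csSup hb' ⟨A b0, hb0B, rfl⟩
      have h3 : t * l (A x0) ≤ 0 := mul_nonpos_of_nonneg_of_nonpos ht (hneg l hb')
      rw [h1] at hsep
      linarith
    have hx0le : p.1 x0 ≤ 0 := by
      by_contra hpos
      push_neg at hpos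
      have hpb := hp b0 hb0B
      set t := (p.2 - p.1 b0 + 1) / (p.1 x0) with htdef
      have hnum : 0 < p.2 - p.1 b0 + 1 := by linarith
      have ht : 0 ≤ t := le_of_lt (by positivity)
      have h4 := hp _ (hline t ht)
      have h5 : p.1 (b0 + t • x0) = p.1 b0 + t * p.1 x0 := by
        rw [map_add, map_smul, smul_eq_mul]
      have h6 : t * p.1 x0 = p.2 - p.1 b0 + 1 := by
        rw [htdef]; field_simp
      rw [h5, h6] at h4
      linarith
    have hfp : f p = p.1 x0 := by
      have := hdec p.1 p.2
      rw [Prod.mk.eta] at this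
      rw [this, heq]
      ring
    rw [hfp] at hupf
    linarith
end

section
/- Let X, Y be real normed spaces, A : X → Y continuous linear, C ⊆ X and D ⊆ Y nonempty closed convex sets with C ∩ A⁻¹(D) ≠ ∅. Let K := Λ + epi σ_C, where Λ := {(A*λ, σ_D(λ)) : λ ∈ Y*, σ_D(λ) < ∞}. Then the weak-* closure of K in X* × ℝ equals the epigraph of the support function of C ∩ A⁻¹(D): cl K = epi σ_{A⁻¹(D) ∩ C}. -/
open Pointwise

section Helpers

variable {X : Type*} [NormedAddCommGroup X] [NormedSpace ℝ X]

instance : LocallyConvexSpace ℝ (WeakDual ℝ X) :=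
  WeakBilin.locallyConvexSpace (B := topDualPairing ℝ X)

instance : IsTopologicalAddGroup (WeakDual ℝ X) :=
  WeakBilin.instIsTopologicalAddGroup (topDualPairing ℝ X)

instance : ContinuousSMul ℝ (WeakDual ℝ X) :=
  WeakBilin.instContinuousSMul (topDualPairing ℝ X)

lemma wd_add_apply (f g : WeakDual ℝ X) (x : X) : (f + g) x = f x + g x := rfl

lemma wd_smul_apply (c : ℝ) (f : WeakDual ℝ X) (x : X) : (c • f) x = c * f x := rfl

lemma wd_zero_apply (x : X) : (0 : WeakDual ℝ X) x = 0 := rfl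

lemma toWeakDual_apply (f : X →L[ℝ] ℝ) (x : X) : toWeakDual f x = f x := rfl

lemma wd_ext {f g : WeakDual ℝ X} (h : ∀ x, f x = g x) : f = g := DFunLike.ext _ _ h

lemma nonpos_of_forall_mul_lt {v u : ℝ} (h : ∀ c : ℝ, 0 < c → c * v < u) : v ≤ 0 := by
  by_contra hv
  push_neg at hv
  have h1 := h ((|u| + 1) / v) (by positivity)
  rw [div_mul_cancel₀ _ (ne_of_gt hv)] at h1
  have := le_abs_self u
  linarith

end Helpers

lemma exists_eval_rep {X : Type*} [NormedAddCommGroup X] [NormedSpace ℝ X]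
    (ψ : WeakDual ℝ X →L[ℝ] ℝ) : ∃ x : X, ∀ f : WeakDual ℝ X, ψ f = f x := by
  classical
  set B := topDualPairing ℝ X with hB
  -- seminorm |ψ ·|
  let q : Seminorm ℝ (WeakDual ℝ X) := (normSeminorm ℝ ℝ).comp ψ.toLinearMap
  have hq : Continuous q := by
    have : Continuous fun f : WeakDual ℝ X => ‖ψ f‖ := ψ.continuous.norm
    exact this
  obtain ⟨s, C, hC, hle⟩ := Seminorm.bound_of_continuous B.weakBilin_withSeminorms q hq
  -- evaluation functionals
  let L : s → (WeakDual ℝ X →ₗ[ℝ] ℝ) := fun x =>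
    { toFun := fun f => f (x : X), map_add' := fun f g => rfl, map_smul' := fun c f => rfl }
  have hker : ⨅ i, LinearMap.ker (L i) ≤ LinearMap.ker ψ.toLinearMap := by
    intro f hf
    simp only [Submodule.mem_iInf, LinearMap.mem_ker] at hf ⊢
    have h0 : (s.sup B.toSeminormFamily) f ≤ 0 := by
      refine Seminorm.finset_sup_apply_le le_rfl fun i hi => ?_
      have := hf ⟨i, hi⟩
      simp only [L] at this
      show ‖f (i:X)‖ ≤ 0
      have h2 : f (i:X) = 0 := this
      simp [h2]
    have := hle f
    simp only [Seminorm.comp_apply, coe_normSeminorm, ContinuousLinearMap.coe_coe] at this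
    have : ‖ψ f‖ ≤ C • (s.sup B.toSeminormFamily) f := this
    have h1 : ‖ψ f‖ ≤ 0 := by
      refine this.trans ?_
      have : (C : ℝ) * (s.sup B.toSeminormFamily) f ≤ 0 := by
        have hCnn : (0:ℝ) ≤ C := C.2
        nlinarith [apply_nonneg (s.sup B.toSeminormFamily) f]
      simpa [NNReal.smul_def, smul_eq_mul] using this
    simpa using le_antisymm h1 (norm_nonneg _)
  have hmem := mem_span_of_iInf_ker_le_ker (𝕜 := ℝ) hker
  rw [Submodule.mem_span_range_iff_exists_fun] at hmem
  obtain ⟨c, hc⟩ := hmem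
  refine ⟨∑ i : s, c i • (i : X), fun f => ?_⟩
  have := congrArg (fun g : WeakDual ℝ X →ₗ[ℝ] ℝ => g f) hc
  simp only [LinearMap.coe_sum, Finset.sum_apply, LinearMap.smul_apply] at this
  rw [ContinuousLinearMap.coe_coe] at this
  rw [← this]
  have : (f : X →L[ℝ] ℝ) (∑ i : s, c i • (i : X)) = ∑ i : s, c i * (f : X →L[ℝ] ℝ) (i : X) := by
    rw [map_sum]
    simp [smul_eq_mul]
  change _ = (f : X →L[ℝ] ℝ) _
  rw [this]
  rfl

/-- Lemma 3 of the paper: with `C, D` nonempty closed convex and `C ∩ A⁻¹(D) ≠ ∅`,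
the weak-* closure of `K := Λ + epi σ_C` equals `epi σ_{A⁻¹(D) ∩ C}`. -/
theorem wclosure_K_eq_epi_support_inter {X Y : Type*}
    [NormedAddCommGroup X] [NormedSpace ℝ X] [NormedAddCommGroup Y] [NormedSpace ℝ Y]
    (A : X →L[ℝ] Y) (C : Set X) (D : Set Y)
    (hCne : C.Nonempty) (hCcl : IsClosed C) (hCconv : Convex ℝ C)
    (hDne : D.Nonempty) (hDcl : IsClosed D) (hDconv : Convex ℝ D)
    (hne : (C ∩ A ⁻¹' D).Nonempty) :
    closure
        ({p : WeakDual ℝ X × ℝ | ∃ l : Y →L[ℝ] ℝ, BddAbove ((fun y => l y) '' D) ∧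
            p = (toWeakDual (l.comp A), sSup ((fun y => l y) '' D))}
          + {p : WeakDual ℝ X × ℝ | ∀ x ∈ C, p.1 x ≤ p.2})
      = {p : WeakDual ℝ X × ℝ | ∀ x ∈ A ⁻¹' D ∩ C, p.1 x ≤ p.2} := by
  classical
  set Λ : Set (WeakDual ℝ X × ℝ) := {p : WeakDual ℝ X × ℝ | ∃ l : Y →L[ℝ] ℝ,
      BddAbove ((fun y => l y) '' D) ∧
      p = (toWeakDual (l.comp A), sSup ((fun y => l y) '' D))} with hΛdef
  set Epi : Set (WeakDual ℝ X × ℝ) := {p : WeakDual ℝ X × ℝ | ∀ x ∈ C, p.1 x ≤ p.2} with hEdef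
  obtain ⟨x₀, hx₀C, hx₀D⟩ := hne
  -- zero memberships
  have himg0 : (fun y => (0 : Y →L[ℝ] ℝ) y) '' D = {0} := by
    have : (fun y => (0 : Y →L[ℝ] ℝ) y) = fun _ => (0:ℝ) := by ext y; simp
    rw [this]
    exact Set.Nonempty.image_const hDne 0
  have hzeroΛ : (0 : WeakDual ℝ X × ℝ) ∈ Λ := by
    refine ⟨0, ?_, ?_⟩
    · rw [himg0]; exact bddAbove_singleton
    · rw [himg0, csSup_singleton]
      refine Prod.ext ?_ rfl
      show toWeakDual ((0 : Y →L[ℝ] ℝ).comp A) = 0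
      rw [ContinuousLinearMap.zero_comp]; rfl
  have hzeroE : (0 : WeakDual ℝ X × ℝ) ∈ Epi := by
    intro x hx
    show (0 : WeakDual ℝ X) x ≤ (0:ℝ)
    rw [wd_zero_apply]
  -- Λ + Epi is convex
  have hKconv : Convex ℝ (Λ + Epi) := by
    rintro p ⟨a1, ⟨l₁, h₁, rfl⟩, b, hb, rfl⟩ q ⟨a2, ⟨l₂, h₂, rfl⟩, b', hb', rfl⟩ ta tb hta htb htab
    set l : Y →L[ℝ] ℝ := ta • l₁ + tb • l₂ with hldef
    have happly : ∀ y, l y = ta * l₁ y + tb * l₂ y := fun y => by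
      simp [hldef]
    set S₁ : ℝ := sSup ((fun y => l₁ y) '' D) with hS₁
    set S₂ : ℝ := sSup ((fun y => l₂ y) '' D) with hS₂
    have hboundy : ∀ y ∈ D, l y ≤ ta * S₁ + tb * S₂ := by
      intro y hy
      rw [happly]
      have e1 : l₁ y ≤ S₁ := le_csSup h₁ (Set.mem_image_of_mem _ hy)
      have e2 : l₂ y ≤ S₂ := le_csSup h₂ (Set.mem_image_of_mem _ hy)
      have := mul_le_mul_of_nonneg_left e1 hta
      have := mul_le_mul_of_nonneg_left e2 htb
      linarith
    have hbdd : BddAbove ((fun y => l y) '' D) := by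
      refine ⟨ta * S₁ + tb * S₂, ?_⟩
      rintro _ ⟨y, hy, rfl⟩
      exact hboundy y hy
    set Sl : ℝ := sSup ((fun y => l y) '' D) with hSl
    have hsup : Sl ≤ ta * S₁ + tb * S₂ := by
      refine csSup_le (hDne.image _) ?_
      rintro _ ⟨y, hy, rfl⟩
      exact hboundy y hy
    set δ : ℝ := ta * S₁ + tb * S₂ - Sl with hδdef
    have hδ : 0 ≤ δ := by rw [hδdef]; linarith
    refine ⟨(toWeakDual (l.comp A), Sl), ⟨l, hbdd, rfl⟩,
      (ta • b + tb • b') + ((0 : WeakDual ℝ X), δ), ?_, ?_⟩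
    · intro x hx
      have e1 : ((ta • b + tb • b') + ((0 : WeakDual ℝ X), δ)).1 x
          = ta * b.1 x + tb * b'.1 x + 0 := rfl
      have e2 : ((ta • b + tb • b') + ((0 : WeakDual ℝ X), δ)).2
          = ta * b.2 + tb * b'.2 + δ := rfl
      rw [e1, e2]
      have := mul_le_mul_of_nonneg_left (hb x hx) hta
      have := mul_le_mul_of_nonneg_left (hb' x hx) htb
      linarith
    · refine Prod.ext ?_ ?_
      · show (toWeakDual (l.comp A) + ((ta • b + tb • b') + ((0 : WeakDual ℝ X), δ)).1 : WeakDual ℝ X)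
            = (ta • ((toWeakDual (l₁.comp A), S₁) + b) + tb • ((toWeakDual (l₂.comp A), S₂) + b')).1
        refine wd_ext fun x => ?_
        show l (A x) + (ta * b.1 x + tb * b'.1 x + 0)
            = ta * (l₁ (A x) + b.1 x) + tb * (l₂ (A x) + b'.1 x)
        rw [happly]
        ring
      · show Sl + (ta * b.2 + tb * b'.2 + δ) = ta * (S₁ + b.2) + tb * (S₂ + b'.2)
        rw [hδdef]
        ring
  -- easy inclusion
  have hsub : Λ + Epi ⊆ {p : WeakDual ℝ X × ℝ | ∀ x ∈ A ⁻¹' D ∩ C, p.1 x ≤ p.2} := by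
    rintro p ⟨a, ⟨l, hbdd, rfl⟩, b, hb, rfl⟩ x ⟨hxD, hxC⟩
    have h1 : l (A x) ≤ sSup ((fun y => l y) '' D) :=
      le_csSup hbdd (Set.mem_image_of_mem _ hxD)
    have h2 : b.1 x ≤ b.2 := hb x hxC
    show ((toWeakDual (l.comp A), sSup ((fun y => l y) '' D)) + b).1 x
        ≤ ((toWeakDual (l.comp A), sSup ((fun y => l y) '' D)) + b).2
    rw [Prod.fst_add, Prod.snd_add, wd_add_apply, toWeakDual_apply]
    exact add_le_add (by simpa using h1) h2
  have hclosed : IsClosed {p : WeakDual ℝ X × ℝ | ∀ x ∈ A ⁻¹' D ∩ C, p.1 x ≤ p.2} := by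
    have : {p : WeakDual ℝ X × ℝ | ∀ x ∈ A ⁻¹' D ∩ C, p.1 x ≤ p.2}
        = ⋂ x ∈ A ⁻¹' D ∩ C, {p : WeakDual ℝ X × ℝ | p.1 x ≤ p.2} := by
      ext p; simp [Set.mem_iInter]
    rw [this]
    refine isClosed_biInter fun x hx => isClosed_le ?_ continuous_snd
    exact (WeakDual.eval_continuous x).comp continuous_fst
  refine Set.Subset.antisymm (closure_minimal hsub hclosed) ?_
  -- hard inclusion
  intro p₀ hp₀
  by_contra hc
  obtain ⟨φ, u, hφK, hφp⟩ := geometric_hahn_banach_closed_point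
    (hKconv.closure) isClosed_closure hc
  obtain ⟨xb, hxb⟩ := exists_eval_rep (φ.comp (ContinuousLinearMap.inl ℝ (WeakDual ℝ X) ℝ))
  set t : ℝ := φ (0, 1) with htdef
  have hφ_eq : ∀ (f : WeakDual ℝ X) (r : ℝ), φ (f, r) = f xb + r * t := by
    intro f r
    have hsplit : (f, r) = (f, (0:ℝ)) + r • ((0 : WeakDual ℝ X), (1:ℝ)) := by
      refine Prod.ext ?_ ?_ <;> simp
    rw [hsplit, map_add, map_smul, smul_eq_mul]
    congr 1
    exact hxb f
  have hK : ∀ p ∈ Λ + Epi, φ p < u := fun p hp => hφK p (subset_closure hp)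
  have hEpiK : ∀ (g : X →L[ℝ] ℝ) (s : ℝ), (∀ x ∈ C, g x ≤ s) →
      (g xb + s * t < u) := by
    intro g s hg
    have hmem : ((toWeakDual g, s) : WeakDual ℝ X × ℝ) ∈ Λ + Epi :=
      ⟨0, hzeroΛ, (toWeakDual g, s), hg, zero_add _⟩
    have := hK _ hmem
    rwa [hφ_eq] at this
  have hΛK : ∀ l : Y →L[ℝ] ℝ, BddAbove ((fun y => l y) '' D) →
      l (A xb) + sSup ((fun y => l y) '' D) * t < u := by
    intro l hbdd
    have hmem : ((toWeakDual (l.comp A), sSup ((fun y => l y) '' D)) : WeakDual ℝ X × ℝ)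
        ∈ Λ + Epi := ⟨_, ⟨l, hbdd, rfl⟩, 0, hzeroE, add_zero _⟩
    have := hK _ hmem
    rwa [hφ_eq] at this
  have hu0 : 0 < u := by
    have := hK 0 ⟨0, hzeroΛ, 0, hzeroE, add_zero _⟩
    rwa [map_zero] at this
  have ht0 : t ≤ 0 := by
    refine nonpos_of_forall_mul_lt (u := u) fun c hc' => ?_
    have hmem : (((0 : WeakDual ℝ X), c) : WeakDual ℝ X × ℝ) ∈ Λ + Epi :=
      ⟨0, hzeroΛ, (0, c), fun x hx => by rw [wd_zero_apply]; exact hc'.le, zero_add _⟩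
    have := hK _ hmem
    rw [hφ_eq, wd_zero_apply, zero_add] at this
    linarith [this]
  -- scaled inequalities
  have hC' : ∀ (g : X →L[ℝ] ℝ) (s : ℝ), (∀ x ∈ C, g x ≤ s) → g xb + s * t ≤ 0 := by
    intro g s hg
    refine nonpos_of_forall_mul_lt (u := u) fun c hc' => ?_
    have hsc : ∀ x ∈ C, (c • g) x ≤ c * s := by
      intro x hx
      simp only [ContinuousLinearMap.smul_apply, smul_eq_mul]
      exact mul_le_mul_of_nonneg_left (hg x hx) hc'.le
    have := hEpiK (c • g) (c * s) hsc
    rw [ContinuousLinearMap.smul_apply, smul_eq_mul] at this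
    calc c * (g xb + s * t) = c * g xb + c * s * t := by ring
    _ < u := this
  have hA' : ∀ (l : Y →L[ℝ] ℝ) (β : ℝ), (∀ y ∈ D, l y ≤ β) → l (A xb) + β * t ≤ 0 := by
    intro l β hl
    refine nonpos_of_forall_mul_lt (u := u) fun c hc' => ?_
    have hbdd : BddAbove ((fun y => (c • l) y) '' D) := by
      refine ⟨c * β, ?_⟩
      rintro _ ⟨y, hy, rfl⟩
      simp only [ContinuousLinearMap.smul_apply, smul_eq_mul]
      exact mul_le_mul_of_nonneg_left (hl y hy) hc'.le
    have hsup : sSup ((fun y => (c • l) y) '' D) ≤ c * β := by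
      refine csSup_le (hDne.image _) ?_
      rintro _ ⟨y, hy, rfl⟩
      simp only [ContinuousLinearMap.smul_apply, smul_eq_mul]
      exact mul_le_mul_of_nonneg_left (hl y hy) hc'.le
    have hlt := hΛK (c • l) hbdd
    rw [ContinuousLinearMap.smul_apply, smul_eq_mul] at hlt
    have hts : sSup ((fun y => (c • l) y) '' D) * t ≥ (c * β) * t :=
      mul_le_mul_of_nonpos_right hsup ht0
    calc c * (l (A xb) + β * t) = c * l (A xb) + (c * β) * t := by ring
    _ ≤ c * l (A xb) + sSup ((fun y => (c • l) y) '' D) * t := by linarith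
    _ < u := hlt
  rcases ht0.lt_or_eq with htneg | htz
  · -- t < 0
    set c0 : ℝ := -t with hc0def
    have hc0 : 0 < c0 := by simpa [hc0def] using htneg
    set x' : X := c0⁻¹ • xb with hx'def
    have hx'C : x' ∈ C := by
      by_contra hx'
      obtain ⟨g, β, hgC, hgx⟩ := geometric_hahn_banach_closed_point hCconv hCcl hx'
      have h1 := hC' g β fun x hx => (hgC x hx).le
      have h2 : g x' = c0⁻¹ * g xb := by rw [hx'def, map_smul, smul_eq_mul]
      have : g xb ≤ β * c0 := by rw [hc0def]; linarith
      have : g x' ≤ β := by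
        rw [h2]
        rw [inv_mul_le_iff₀ hc0]
        linarith [this]
      linarith
    have hx'D : A x' ∈ D := by
      by_contra hx'
      obtain ⟨l, β, hlD, hlx⟩ := geometric_hahn_banach_closed_point hDconv hDcl hx'
      have h1 := hA' l β fun y hy => (hlD y hy).le
      have h2 : l (A x') = c0⁻¹ * l (A xb) := by
        rw [hx'def, map_smul, map_smul, smul_eq_mul]
      have h3 : l (A xb) ≤ β * c0 := by rw [hc0def]; linarith
      have : l (A x') ≤ β := by
        rw [h2, inv_mul_le_iff₀ hc0]
        linarith [h3]
      linarith
    have hle := hp₀ x' ⟨hx'D, hx'C⟩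
    have hxb_eq : p₀.1 xb = c0 * p₀.1 x' := by
      have : xb = c0 • x' := by
        rw [hx'def, smul_smul, mul_inv_cancel₀ (ne_of_gt hc0), one_smul]
      rw [this, map_smul, smul_eq_mul]
    have hφp₀ : φ p₀ = p₀.1 xb + p₀.2 * t := by
      rw [← hφ_eq]
    have : φ p₀ ≤ 0 := by
      rw [hφp₀, hxb_eq]
      have : c0 * p₀.1 x' + p₀.2 * t = c0 * (p₀.1 x' - p₀.2) := by
        rw [hc0def]; ring
      rw [this]
      exact mul_nonpos_of_nonneg_of_nonpos hc0.le (by linarith)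
    linarith
  · -- t = 0
    have hCz : ∀ (g : X →L[ℝ] ℝ) (s : ℝ), (∀ x ∈ C, g x ≤ s) → g xb ≤ 0 := by
      intro g s hg
      have := hC' g s hg
      rw [htz, mul_zero, add_zero] at this
      exact this
    have hAz : ∀ (l : Y →L[ℝ] ℝ) (β : ℝ), (∀ y ∈ D, l y ≤ β) → l (A xb) ≤ 0 := by
      intro l β hl
      have := hA' l β hl
      rw [htz, mul_zero, add_zero] at this
      exact this
    have hray : ∀ c : ℝ, 0 ≤ c → x₀ + c • xb ∈ A ⁻¹' D ∩ C := by
      intro c hcnn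
      constructor
      · show A (x₀ + c • xb) ∈ D
        by_contra hx'
        rw [map_add, map_smul] at hx'
        obtain ⟨l, β, hlD, hlx⟩ := geometric_hahn_banach_closed_point hDconv hDcl hx'
        have h1 := hAz l β fun y hy => (hlD y hy).le
        have h2 : l (A x₀) < β := hlD _ hx₀D
        rw [map_add, map_smul, smul_eq_mul] at hlx
        nlinarith
      · by_contra hx'
        obtain ⟨g, β, hgC, hgx⟩ := geometric_hahn_banach_closed_point hCconv hCcl hx'
        have h1 := hCz g β fun x hx => (hgC x hx).le
        have h2 : g x₀ < β := hgC _ hx₀C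
        rw [map_add, map_smul, smul_eq_mul] at hgx
        nlinarith
    have hxb_le : p₀.1 xb ≤ 0 := by
      refine nonpos_of_forall_mul_lt (u := p₀.2 - p₀.1 x₀ + 1) fun c hc' => ?_
      have := hp₀ _ (hray c hc'.le)
      rw [map_add, map_smul, smul_eq_mul] at this
      linarith
    have hφp₀ : φ p₀ = p₀.1 xb := by
      have : φ p₀ = p₀.1 xb + p₀.2 * t := by rw [← hφ_eq]
      rw [this, htz]; ring
    linarith [hφp₀ ▸ hφp]
end

section
/- Let X, Y be real normed spaces, A : X → Y continuous linear, and D ⊆ Y a nonempty closed convex set. Then A⁻¹(D) ≠ ∅ if and only if (0, −1) does not belong to the weak-* closure of the set {(A*λ, σ_D(λ)) : λ ∈ Y*, σ_D(λ) < ∞} + ({0} × ℝ≥0) in X* × ℝ. -/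
open Pointwise

open Topology



theorem weakdual_dual_eval {X : Type*} [NormedAddCommGroup X] [NormedSpace ℝ X]
    (f : WeakDual ℝ X →L[ℝ] ℝ) : ∃ x : X, ∀ p : WeakDual ℝ X, f p = p x := by
  have : Nonempty X := ⟨0⟩
  have hsem := (topDualPairing ℝ X).weakBilin_withSeminorms
  set P := (topDualPairing ℝ X).toSeminormFamily with hP
  let q : Seminorm ℝ (WeakDual ℝ X) := (normSeminorm ℝ ℝ).comp (f : WeakDual ℝ X →ₗ[ℝ] ℝ)
  have hq : Continuous q := by
    have : ⇑q = fun p => ‖f p‖ := rfl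
    rw [this]
    exact continuous_norm.comp f.continuous
  obtain ⟨s, C, hC0, hle⟩ := Seminorm.bound_of_continuous hsem q hq
  -- the evaluation functionals
  let L : s → (WeakDual ℝ X) →ₗ[ℝ] ℝ := fun i => (topDualPairing ℝ X).flip (i : X)
  have hker : ⨅ i, LinearMap.ker (L i) ≤ LinearMap.ker (f : WeakDual ℝ X →ₗ[ℝ] ℝ) := by
    intro p hp
    simp only [Submodule.mem_iInf, LinearMap.mem_ker] at hp
    have hsup : (s.sup P) p ≤ 0 := by
      apply Seminorm.finset_sup_apply_le le_rfl
      intro i hi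
      have : P i p = ‖p i‖ := rfl
      rw [this]
      have : (p : X →L[ℝ] ℝ) i = 0 := hp ⟨i, hi⟩
      simp [this]
    have hqp : q p ≤ 0 := by
      calc q p ≤ (C • s.sup P) p := hle p
      _ = (C : ℝ) * (s.sup P) p := rfl
      _ ≤ 0 := mul_nonpos_of_nonneg_of_nonpos C.coe_nonneg hsup
    have : ‖f p‖ ≤ 0 := hqp
    simpa [LinearMap.mem_ker] using norm_le_zero_iff.mp this
  have hspan := mem_span_of_iInf_ker_le_ker hker
  obtain ⟨c, hc⟩ := (Submodule.mem_span_range_iff_exists_fun ℝ).mp hspan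
  refine ⟨∑ i, c i • (i : X), fun p => ?_⟩
  have := congrArg (fun g : WeakDual ℝ X →ₗ[ℝ] ℝ => g p) hc
  simp only [LinearMap.coe_sum, Finset.sum_apply, LinearMap.smul_apply] at this
  rw [show (f : WeakDual ℝ X →ₗ[ℝ] ℝ) p = f p from rfl] at this
  rw [← this]
  rw [map_sum]
  congr 1
  ext i
  rw [map_smul]
  rfl

instance instLocallyConvexWeakDual {X : Type*} [NormedAddCommGroup X] [NormedSpace ℝ X] :
    LocallyConvexSpace ℝ (WeakDual ℝ X) :=
  WeakBilin.locallyConvexSpace (B := topDualPairing ℝ X)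


set_option maxHeartbeats 1000000 in
/-- Corollary 3 of the paper: for `D` nonempty closed convex, `A⁻¹(D) ≠ ∅` iff
`(0, −1)` is not in the weak-* closure of `Λ + ({0} × ℝ≥0)`. -/
theorem preimage_nonempty_iff_not_mem_wclosure {X Y : Type*}
    [NormedAddCommGroup X] [NormedSpace ℝ X] [NormedAddCommGroup Y] [NormedSpace ℝ Y]
    (A : X →L[ℝ] Y) (D : Set Y)
    (hDne : D.Nonempty) (hDcl : IsClosed D) (hDconv : Convex ℝ D) :
    (A ⁻¹' D).Nonempty ↔
      ((0 : WeakDual ℝ X), (-1 : ℝ)) ∉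
        closure
          ({p : WeakDual ℝ X × ℝ | ∃ l : Y →L[ℝ] ℝ, BddAbove ((fun y => l y) '' D) ∧
              p = (toWeakDual (l.comp A), sSup ((fun y => l y) '' D))}
            + ({0} ×ˢ Set.Ici (0 : ℝ))) := by
  set σ : (Y →L[ℝ] ℝ) → ℝ := fun l => sSup ((fun y => l y) '' D) with hσ
  set Λ : Set (WeakDual ℝ X × ℝ) := {p : WeakDual ℝ X × ℝ | ∃ l : Y →L[ℝ] ℝ,
      BddAbove ((fun y => l y) '' D) ∧ p = (toWeakDual (l.comp A), σ l)} with hΛ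
  set S : Set (WeakDual ℝ X × ℝ) := Λ + ({0} ×ˢ Set.Ici (0 : ℝ)) with hS
  have himg_ne : ∀ l : Y →L[ℝ] ℝ, ((fun y => l y) '' D).Nonempty := fun l => hDne.image _
  -- σ l bounds l y on D
  have hle_σ : ∀ (l : Y →L[ℝ] ℝ), BddAbove ((fun y => l y) '' D) → ∀ y ∈ D, l y ≤ σ l :=
    fun l hb y hy => le_csSup hb ⟨y, hy, rfl⟩
  -- combination lemma
  have hcomb : ∀ (a b : ℝ), 0 ≤ a → 0 ≤ b → ∀ (l₁ l₂ : Y →L[ℝ] ℝ),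
      BddAbove ((fun y => l₁ y) '' D) → BddAbove ((fun y => l₂ y) '' D) →
      BddAbove ((fun y => (a • l₁ + b • l₂) y) '' D) ∧
        σ (a • l₁ + b • l₂) ≤ a * σ l₁ + b * σ l₂ := by
    intro a b ha hb l₁ l₂ h₁ h₂
    have hub : ∀ z ∈ (fun y => (a • l₁ + b • l₂) y) '' D, z ≤ a * σ l₁ + b * σ l₂ := by
      rintro z ⟨y, hy, rfl⟩
      simp only [ContinuousLinearMap.add_apply, ContinuousLinearMap.coe_smul',
        Pi.smul_apply, smul_eq_mul]
      exact add_le_add (mul_le_mul_of_nonneg_left (hle_σ l₁ h₁ y hy) ha)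
        (mul_le_mul_of_nonneg_left (hle_σ l₂ h₂ y hy) hb)
    exact ⟨⟨_, hub⟩, csSup_le (himg_ne _) hub⟩
  have hzero : BddAbove ((fun y => (0 : Y →L[ℝ] ℝ) y) '' D) ∧ σ 0 = 0 := by
    have : (fun y => (0 : Y →L[ℝ] ℝ) y) '' D = {0} := by
      rw [show (fun y => (0 : Y →L[ℝ] ℝ) y) = fun _ => (0:ℝ) from rfl]
      exact hDne.image_const 0
    rw [hσ]
    simp only [this]
    exact ⟨bddAbove_singleton, csSup_singleton 0⟩
  constructor
  · -- forward direction
    rintro ⟨x, hx⟩ hmem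
    set φ : WeakDual ℝ X × ℝ → ℝ := fun q => -(q.1 x) + q.2 with hφ
    have hφc : Continuous φ := by
      exact ((WeakDual.eval_continuous x).comp continuous_fst).neg.add continuous_snd
    have hcl : IsClosed {q : WeakDual ℝ X × ℝ | 0 ≤ φ q} :=
      isClosed_le continuous_const hφc
    have hsub : S ⊆ {q | 0 ≤ φ q} := by
      rintro q ⟨p₁, hp₁, p₂, hp₂, rfl⟩
      obtain ⟨l, hb, rfl⟩ := hp₁
      obtain ⟨h0, ht⟩ := hp₂
      simp only [Set.mem_singleton_iff] at h0
      have ht' : (0:ℝ) ≤ p₂.2 := ht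
      have hσx := hle_σ l hb (A x) hx
      show 0 ≤ φ _
      have hval : φ ((toWeakDual (l.comp A), σ l) + p₂) = -(l (A x)) + (σ l + p₂.2) := by
        simp only [hφ, Prod.fst_add, Prod.snd_add, h0, add_zero]
        rw [show (toWeakDual (l.comp A)) x = l (A x) from rfl]
      rw [hval]
      linarith
    have := closure_minimal hsub hcl hmem
    simp only [Set.mem_setOf_eq, hφ] at this
    rw [show ((0 : WeakDual ℝ X)) x = (0:ℝ) from rfl] at this
    linarith
  · intro h
    -- convexity of S
    have hSconv : Convex ℝ S := by
      rintro q₁ ⟨_, ⟨l₁, hb₁, rfl⟩, ⟨z₁, t₁⟩, ⟨hz₁, ht₁⟩, rfl⟩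
        q₂ ⟨_, ⟨l₂, hb₂, rfl⟩, ⟨z₂, t₂⟩, ⟨hz₂, ht₂⟩, rfl⟩ a b ha hb hab
      simp only [Set.mem_singleton_iff] at hz₁ hz₂
      obtain ⟨hbl, hσl⟩ := hcomb a b ha hb l₁ l₂ hb₁ hb₂
      set l := a • l₁ + b • l₂ with hl
      have ht₁' : (0:ℝ) ≤ t₁ := ht₁
      have ht₂' : (0:ℝ) ≤ t₂ := ht₂
      set T : ℝ := a * σ l₁ + b * σ l₂ + a * t₁ + b * t₂ - σ l with hT
      have hT0 : (0:ℝ) ≤ T := by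
        have : 0 ≤ a * t₁ := mul_nonneg ha ht₁'
        have : 0 ≤ b * t₂ := mul_nonneg hb ht₂'
        simp only [hT]
        nlinarith [mul_nonneg ha ht₁', mul_nonneg hb ht₂']
      have key : a • ((toWeakDual (l₁.comp A), σ l₁) + (z₁, t₁))
          + b • ((toWeakDual (l₂.comp A), σ l₂) + (z₂, t₂))
          = (toWeakDual (l.comp A), σ l) + ((0 : WeakDual ℝ X), T) := by
        subst hz₁; subst hz₂
        have h1 : toWeakDual (l.comp A)
            = a • toWeakDual (l₁.comp A) + b • toWeakDual (l₂.comp A) := by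
          show toWeakDual ((a • l₁ + b • l₂).comp A) = _
          rw [show (a • l₁ + b • l₂).comp A = a • (l₁.comp A) + b • (l₂.comp A) by
            ext x; simp]
          rfl
        apply Prod.ext
        · show a • (toWeakDual (l₁.comp A) + 0) + b • (toWeakDual (l₂.comp A) + 0)
            = toWeakDual (l.comp A) + 0
          rw [h1]
          simp
        · show a • (σ l₁ + t₁) + b • (σ l₂ + t₂) = σ l + T
          simp only [smul_eq_mul, hT]
          ring
      rw [key]
      exact Set.add_mem_add ⟨l, hbl, rfl⟩ (by
        refine Set.mem_prod.mpr ⟨rfl, hT0⟩)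
    -- separation
    obtain ⟨F, u, hFu, huF⟩ :=
      geometric_hahn_banach_closed_point hSconv.closure isClosed_closure h
    set g : WeakDual ℝ X →L[ℝ] ℝ := F.comp (ContinuousLinearMap.inl ℝ (WeakDual ℝ X) ℝ)
      with hg
    set c : ℝ := F ((0 : WeakDual ℝ X), (1:ℝ)) with hc
    have hFdec : ∀ q : WeakDual ℝ X × ℝ, F q = g q.1 + q.2 * c := by
      intro q
      have hq : q = (q.1, 0) + q.2 • (((0 : WeakDual ℝ X), (1:ℝ))) := by
        apply Prod.ext <;> simp
      conv_lhs => rw [hq, map_add, map_smul]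
      rfl
    obtain ⟨x₀, hx₀⟩ := weakdual_dual_eval g
    -- evaluate F on elements of S
    have hkey : ∀ l : Y →L[ℝ] ℝ, BddAbove ((fun y => l y) '' D) → ∀ t : ℝ, 0 ≤ t →
        l (A x₀) + (σ l + t) * c < u := by
      intro l hb t ht
      have hmemS : (toWeakDual (l.comp A), σ l) + ((0 : WeakDual ℝ X), t) ∈ S :=
        Set.add_mem_add ⟨l, hb, rfl⟩ (Set.mem_prod.mpr ⟨rfl, ht⟩)
      have := hFu _ (subset_closure hmemS)
      rw [hFdec] at this
      simp only [Prod.fst_add, Prod.snd_add, add_zero] at this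
      rw [hx₀] at this
      exact this
    -- 0 < u
    have hu0 : 0 < u := by
      have := hkey 0 hzero.1 0 le_rfl
      rw [hzero.2] at this
      simpa using this
    -- c < 0
    have hc0 : c < 0 := by
      have hF01 : F ((0 : WeakDual ℝ X), (-1:ℝ)) = -c := by
        rw [hFdec]
        show g 0 + (-1) * c = -c
        rw [map_zero]; ring
      rw [hF01] at huF
      linarith
    -- scaling argument
    have hfin : ∀ l : Y →L[ℝ] ℝ, BddAbove ((fun y => l y) '' D) →
        l (A x₀) + σ l * c ≤ 0 := by
      intro l hb
      by_contra hcon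
      push_neg at hcon
      set v : ℝ := l (A x₀) + σ l * c with hv
      have hscale : ∀ s : ℝ, 0 < s → s * v < u := by
        intro s hs
        obtain ⟨hbs, hσs⟩ := by
          have := hcomb s 0 hs.le le_rfl l l hb hb
          simpa using this
        have h1 := hkey (s • l) hbs 0 le_rfl
        rw [add_zero] at h1
        have h2 : (s • l) (A x₀) = s * l (A x₀) := rfl
        have h3 : σ (s • l) * c ≥ (s * σ l) * c :=
          mul_le_mul_of_nonpos_right hσs hc0.le
        nlinarith
      have := hscale ((u + 1) / v) (by positivity)
      rw [div_mul_cancel₀ _ (ne_of_gt hcon)] at this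
      linarith
    -- the solution point
    set xs : X := (-c)⁻¹ • x₀ with hxs
    have hAxs : ∀ l : Y →L[ℝ] ℝ, BddAbove ((fun y => l y) '' D) → l (A xs) ≤ σ l := by
      intro l hb
      have h1 := hfin l hb
      have h2 : l (A xs) = (-c)⁻¹ * l (A x₀) := by
        rw [hxs, map_smul, map_smul]; rfl
      have hcpos : 0 < -c := by linarith
      rw [h2]
      rw [inv_mul_le_iff₀ hcpos]
      nlinarith
    refine ⟨xs, ?_⟩
    show A xs ∈ D
    by_contra hAD
    obtain ⟨l, u', hlu, hul⟩ := geometric_hahn_banach_closed_point hDconv hDcl hAD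
    have hbl : BddAbove ((fun y => l y) '' D) := by
      refine ⟨u', ?_⟩
      rintro z ⟨y, hy, rfl⟩
      exact (hlu y hy).le
    have : σ l ≤ u' := csSup_le (himg_ne l) (by rintro z ⟨y, hy, rfl⟩; exact (hlu y hy).le)
    have := hAxs l hbl
    linarith
end

section
/- Let X, Y be real normed spaces, A : X → Y continuous linear, C ⊆ X and D ⊆ Y nonempty convex sets, f : X → ℝ ∪ {+∞} proper convex with C ∩ dom f ≠ ∅. Define F₀ := ⋃_{x ∈ C ∩ dom f} {(A x, f(x))} + (−D) × ℝ≥0 ⊆ Y × ℝ. Then the implication [ (∀ x ∈ C with A x ∈ D, f(x) ≥ 0) ⟹ (∃ λ ∈ Y* with σ_D(λ) < ∞ and f(x) + ⟨λ, A x⟩ ≥ σ_D(λ) for all x ∈ C) ] holds if and only if the convex cone ℝ≥0 · F₀ is closed regarding {(0, −1)} in Y × ℝ. -/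
open Pointwise

/-- Theorem 2 (2nd characterization of Farkas' Lemma).  The proper convex function
`f : X → ℝ ∪ {+∞}` is modelled by its effective domain `S` and a real-valued `f`
convex on `S`.  With `F₀ := {(A x, f x) : x ∈ C ∩ S} + (−D) × ℝ≥0`, the implication
"[(∀ x ∈ C, A x ∈ D → f(x) ≥ 0) ⟹ (∃ λ in the barrier cone of D with
f(x) + ⟨λ, A x⟩ ≥ σ_D(λ) for all x ∈ C)]" holds iff the convex cone `ℝ≥0 • F₀` is
closed regarding `{(0, −1)}` in `Y × ℝ`. -/
theorem farkas_second_characterization {X Y : Type*}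
    [NormedAddCommGroup X] [NormedSpace ℝ X] [NormedAddCommGroup Y] [NormedSpace ℝ Y]
    (A : X →L[ℝ] Y) (C : Set X) (D : Set Y)
    (hCne : C.Nonempty) (hCconv : Convex ℝ C) (hDne : D.Nonempty) (hDconv : Convex ℝ D)
    (S : Set X) (f : X → ℝ) (hf : ConvexOn ℝ S f) (hCS : (C ∩ S).Nonempty)
    (F₀ R : Set (Y × ℝ))
    (hF₀ : F₀ = (fun x => (A x, f x)) '' (C ∩ S) + (-D) ×ˢ Set.Ici (0 : ℝ))
    (hR : R = (Set.Ici (0 : ℝ)) • F₀) :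
    ((∀ x ∈ C, A x ∈ D → x ∈ S → 0 ≤ f x) →
        ∃ l : Y →L[ℝ] ℝ, BddAbove ((fun y => l y) '' D) ∧
          ∀ x ∈ C ∩ S, sSup ((fun y => l y) '' D) ≤ f x + l (A x)) ↔
      (((0 : Y), (-1 : ℝ)) ∈ R ∨ ((0 : Y), (-1 : ℝ)) ∉ closure R) := by
    -- membership characterization of F₀
  have hmemF : ∀ q : Y × ℝ, q ∈ F₀ ↔
      ∃ x ∈ C ∩ S, ∃ d ∈ D, ∃ r : ℝ, 0 ≤ r ∧ q = (A x - d, f x + r) := by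
    intro q
    rw [hF₀, Set.mem_add]
    constructor
    · rintro ⟨a, ⟨x, hx, rfl⟩, b, ⟨hb1, hb2⟩, rfl⟩
      refine ⟨x, hx, -b.1, by simpa using hb1, b.2, hb2, ?_⟩
      simp [Prod.ext_iff, sub_eq_add_neg]
    · rintro ⟨x, hx, d, hd, r, hr, rfl⟩
      refine ⟨(A x, f x), ⟨x, hx, rfl⟩, (-d, r), ⟨by simpa using hd, hr⟩, ?_⟩
      simp [Prod.ext_iff, sub_eq_add_neg]
  -- membership characterization of R
  have hmemR : ∀ q : Y × ℝ, q ∈ R ↔ ∃ t : ℝ, 0 ≤ t ∧ ∃ a ∈ F₀, t • a = q := by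
    intro q
    rw [hR, Set.mem_smul]
    constructor
    · rintro ⟨t, ht, a, ha, rfl⟩; exact ⟨t, ht, a, ha, rfl⟩
    · rintro ⟨t, ht, a, ha, rfl⟩; exact ⟨t, ht, a, ha, rfl⟩
  obtain ⟨x₀, hx₀⟩ := hCS
  obtain ⟨d₀, hd₀⟩ := hDne
  have hF₀ne : F₀.Nonempty :=
    ⟨(A x₀ - d₀, f x₀ + 0), (hmemF _).2 ⟨x₀, hx₀, d₀, hd₀, 0, le_refl 0, rfl⟩⟩
  have hzero : ((0 : Y), (0 : ℝ)) ∈ R := by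
    refine (hmemR _).2 ⟨0, le_refl 0, hF₀ne.choose, hF₀ne.choose_spec, ?_⟩
    simp [Prod.ext_iff]
  have hscale : ∀ t : ℝ, 0 ≤ t → ∀ a ∈ R, t • a ∈ R := by
    intro t ht a ha
    obtain ⟨s, hs, b, hb, rfl⟩ := (hmemR a).1 ha
    exact (hmemR _).2 ⟨t * s, mul_nonneg ht hs, b, hb, mul_smul t s b⟩
  have hFR : F₀ ⊆ R := fun a ha => (hmemR a).2 ⟨1, zero_le_one, a, ha, one_smul ℝ a⟩
  -- convexity of F₀
  have hFconv : Convex ℝ F₀ := by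
    rintro q₁ hq₁ q₂ hq₂ θ₁ θ₂ h1 h2 hsum
    obtain ⟨x₁, hx₁, d₁, hd₁, r₁, hr₁, rfl⟩ := (hmemF q₁).1 hq₁
    obtain ⟨x₂, hx₂, d₂, hd₂, r₂, hr₂, rfl⟩ := (hmemF q₂).1 hq₂
    have hxS : θ₁ • x₁ + θ₂ • x₂ ∈ S := hf.1 hx₁.2 hx₂.2 h1 h2 hsum
    have hfc : f (θ₁ • x₁ + θ₂ • x₂) ≤ θ₁ * f x₁ + θ₂ * f x₂ := by
      simpa [smul_eq_mul] using hf.2 hx₁.2 hx₂.2 h1 h2 hsum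
    refine (hmemF _).2 ⟨θ₁ • x₁ + θ₂ • x₂, ⟨hCconv hx₁.1 hx₂.1 h1 h2 hsum, hxS⟩,
      θ₁ • d₁ + θ₂ • d₂, hDconv hd₁ hd₂ h1 h2 hsum,
      (θ₁ * f x₁ + θ₂ * f x₂ - f (θ₁ • x₁ + θ₂ • x₂)) + (θ₁ * r₁ + θ₂ * r₂), ?_, ?_⟩
    · have : 0 ≤ θ₁ * r₁ + θ₂ * r₂ := by positivity
      linarith
    · refine Prod.ext ?_ ?_
      · simp only [Prod.smul_mk, Prod.mk_add_mk, smul_sub, map_add, map_smul]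
        abel
      · simp only [Prod.smul_mk, Prod.mk_add_mk, smul_eq_mul]
        ring
  -- convexity of R
  have hRconv : Convex ℝ R := by
    rintro q₁ hq₁ q₂ hq₂ θ₁ θ₂ h1 h2 hsum
    obtain ⟨t₁, ht₁, a₁, ha₁, rfl⟩ := (hmemR q₁).1 hq₁
    obtain ⟨t₂, ht₂, a₂, ha₂, rfl⟩ := (hmemR q₂).1 hq₂
    set s := θ₁ * t₁ + θ₂ * t₂ with hs
    rcases eq_or_lt_of_le (by positivity : (0:ℝ) ≤ s) with hs0 | hs0
    · have h1' : θ₁ * t₁ = 0 := by nlinarith [mul_nonneg h1 ht₁, mul_nonneg h2 ht₂]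
      have h2' : θ₂ * t₂ = 0 := by nlinarith [mul_nonneg h1 ht₁, mul_nonneg h2 ht₂]
      have : θ₁ • t₁ • a₁ + θ₂ • t₂ • a₂ = (0:Y × ℝ) := by
        rw [smul_smul, smul_smul, h1', h2']; simp
      rw [this]
      refine (hmemR _).2 ⟨0, le_refl 0, a₁, ha₁, by simp⟩
    · have hmem : (θ₁ * t₁ / s) • a₁ + (θ₂ * t₂ / s) • a₂ ∈ F₀ := by
        refine hFconv ha₁ ha₂ (by positivity) (by positivity) ?_
        field_simp
        exact hs.symm
      refine (hmemR _).2 ⟨s, hs0.le, _, hmem, ?_⟩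
      rw [smul_add, smul_smul, smul_smul, smul_smul, smul_smul]
      rw [mul_div_cancel₀ _ hs0.ne', mul_div_cancel₀ _ hs0.ne']
  constructor
  · -- (P → Q) → closed regarding point
    intro h
    by_contra hcon
    push_neg at hcon
    obtain ⟨hnot, hcl⟩ := hcon
    -- P holds
    have hP : ∀ x ∈ C, A x ∈ D → x ∈ S → 0 ≤ f x := by
      intro x hxC hAx hxS
      by_contra hneg
      push_neg at hneg
      apply hnot
      refine (hmemR _).2 ⟨(-(f x))⁻¹, le_of_lt (inv_pos.2 (by linarith)), ((0:Y), f x),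
        (hmemF _).2 ⟨x, ⟨hxC, hxS⟩, A x, hAx, 0, le_refl 0, by simp⟩, ?_⟩
      have hfx : f x ≠ 0 := ne_of_lt hneg
      refine Prod.ext (by simp) ?_
      simp only [Prod.smul_mk, smul_eq_mul]
      field_simp
    obtain ⟨l, hbdd, hsup⟩ := h hP
    -- the functional q ↦ l q.1 + q.2 is nonneg on closure R
    have hψ : closure R ⊆ {q : Y × ℝ | 0 ≤ l q.1 + q.2} := by
      apply closure_minimal
      · rintro q hq
        obtain ⟨t, ht, a, ha, rfl⟩ := (hmemR q).1 hq
        obtain ⟨x, hx, d, hd, r, hr, rfl⟩ := (hmemF a).1 ha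
        have hld : l d ≤ sSup ((fun y => l y) '' D) := le_csSup hbdd ⟨d, hd, rfl⟩
        have hMx : sSup ((fun y => l y) '' D) ≤ f x + l (A x) := hsup x hx
        have hkey : 0 ≤ l (A x) - l d + (f x + r) := by linarith
        show 0 ≤ l (t • (A x - d, f x + r)).1 + (t • (A x - d, f x + r)).2
        simp only [Prod.smul_fst, Prod.smul_snd, map_smul, smul_eq_mul, map_sub]
        calc (0:ℝ) = t * 0 := by ring
          _ ≤ t * (l (A x) - l d + (f x + r)) := by
              exact mul_le_mul_of_nonneg_left hkey ht
          _ = t * (l (A x) - l d) + t * (f x + r) := by ring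
      · exact isClosed_le continuous_const
          ((l.continuous.comp continuous_fst).add continuous_snd)
    have := hψ hcl
    simp only [Set.mem_setOf_eq, map_zero] at this
    linarith
  · -- closed regarding point → (P → Q)
    rintro (hmem | hncl) hP
    · -- (0,-1) ∈ R contradicts P
      exfalso
      obtain ⟨t, ht, a, ha, hta⟩ := (hmemR _).1 hmem
      obtain ⟨x, hx, d, hd, r, hr, rfl⟩ := (hmemF a).1 ha
      have h1 : t • (A x - d) = 0 := congrArg Prod.fst hta
      have h2 : t * (f x + r) = -1 := congrArg Prod.snd hta
      have htpos : 0 < t := by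
        rcases ht.lt_or_eq with h | h
        · exact h
        · exfalso; rw [← h] at h2; simp at h2
      have hAd : A x = d := by
        have := (smul_eq_zero.1 h1).resolve_left (ne_of_gt htpos)
        exact sub_eq_zero.1 this
      have hfxr : f x + r < 0 := by nlinarith
      have hfx : f x < 0 := by linarith
      have := hP x hx.1 (hAd ▸ hd) hx.2
      linarith
    · -- separation
      obtain ⟨g, u, hgu, hup⟩ := geometric_hahn_banach_closed_point
        hRconv.closure isClosed_closure hncl
      have hu0 : 0 < u := by
        have := hgu _ (subset_closure hzero)
        have h0 : g ((0:Y), (0:ℝ)) = 0 := map_zero g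
        simpa [h0] using this
      have hg0 : ∀ a ∈ R, g a ≤ 0 := by
        intro a ha
        by_contra hpos
        push_neg at hpos
        have ht : (0:ℝ) ≤ u / g a := le_of_lt (by positivity)
        have := hgu _ (subset_closure (hscale _ ht a ha))
        rw [map_smul, smul_eq_mul, div_mul_cancel₀ _ (ne_of_gt hpos)] at this
        exact lt_irrefl u this
      set c := g ((0:Y), (1:ℝ)) with hcdef
      have hgp : g ((0:Y), (-1:ℝ)) = -c := by
        have : ((0:Y), (-1:ℝ)) = (-1 : ℝ) • ((0:Y), (1:ℝ)) := by simp
        rw [this, map_smul]; simp; exact hcdef.symm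
      have hc : c < 0 := by
        have := hup
        rw [hgp] at this
        linarith
      have hdec : ∀ (y : Y) (r : ℝ), g (y, r) = g (y, 0) + r * c := by
        intro y r
        have : (y, r) = ((y, (0:ℝ)) + r • ((0:Y), (1:ℝ)) : Y × ℝ) := by simp
        rw [this, map_add, map_smul, smul_eq_mul]
      set l : Y →L[ℝ] ℝ := c⁻¹ • (g.comp (ContinuousLinearMap.inl ℝ Y ℝ)) with hl
      have hlval : ∀ y : Y, l y = c⁻¹ * g (y, 0) := by
        intro y
        simp [hl, ContinuousLinearMap.smul_apply, ContinuousLinearMap.comp_apply,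
          ContinuousLinearMap.inl_apply, smul_eq_mul]
      have key : ∀ x ∈ C ∩ S, ∀ d ∈ D, l d ≤ f x + l (A x) := by
        intro x hx d hd
        have hin : (A x - d, f x) ∈ F₀ := by
          refine (hmemF _).2 ⟨x, hx, d, hd, 0, le_refl 0, by simp⟩
        have hle : g (A x - d, f x) ≤ 0 := hg0 _ (hFR hin)
        have hsplit : g ((A x - d, (0:ℝ)) : Y × ℝ) = g (A x, 0) - g (d, 0) := by
          have : ((A x - d, (0:ℝ)) : Y × ℝ) = ((A x, (0:ℝ)) : Y × ℝ) - (d, 0) := by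
            simp [Prod.ext_iff]
          rw [this, map_sub]
        rw [hdec, hsplit] at hle
        rw [hlval, hlval]
        have hinv : c * c⁻¹ = 1 := mul_inv_cancel₀ (ne_of_lt hc)
        have hpos : 0 ≤ (-c⁻¹) * (-(g (A x, 0) - g (d, 0) + f x * c)) :=
          mul_nonneg (le_of_lt (neg_pos.2 (inv_neg''.2 hc))) (neg_nonneg.2 hle)
        have h5 : f x * (c * c⁻¹) = f x := by rw [hinv, mul_one]
        nlinarith [hpos, h5]
      have hbdd : BddAbove ((fun y => l y) '' D) := by
        refine ⟨f x₀ + l (A x₀), ?_⟩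
        rintro _ ⟨d, hd, rfl⟩
        exact key x₀ hx₀ d hd
      refine ⟨l, hbdd, fun x hx => csSup_le ⟨_, Set.mem_image_of_mem _ hd₀⟩ ?_⟩
      rintro _ ⟨d, hd, rfl⟩
      exact key x hx d hd
end

section
/- Let X, Y be real normed spaces, A : X → Y continuous linear, a' ∈ X*, and Q ⊆ Y a nonempty convex cone. Then the equivalence [ (∀ x, A x ∈ Q ⟹ ⟨a', x⟩ ≥ 0) ⟺ (∃ μ ∈ Q⁺ with A*μ = a') ] holds if and only if the set ⋃_{x∈X} {(A x, ⟨a', x⟩)} + (−Q) × ℝ≥0 is closed regarding {(0, −1)} in Y × ℝ. -/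
open Pointwise

/-- Corollary 2 of the paper: for `a' ∈ X*` and a nonempty convex cone `Q ⊆ Y`
(not necessarily closed, not necessarily containing the origin), the equivalence
"[(∀ x, A x ∈ Q → ⟨a', x⟩ ≥ 0) ⟺ (∃ μ ∈ Q⁺, A*μ = a')]" holds iff the set
`{(A x, ⟨a', x⟩) : x ∈ X} + (−Q) × ℝ≥0` is closed regarding `{(0, −1)}`. -/
theorem farkas_homogeneous_primal_characterization {X Y : Type*}
    [NormedAddCommGroup X] [NormedSpace ℝ X] [NormedAddCommGroup Y] [NormedSpace ℝ Y]
    (A : X →L[ℝ] Y) (a' : X →L[ℝ] ℝ) (Q : Set Y)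
    (hQne : Q.Nonempty) (hQconv : Convex ℝ Q)
    (hQcone : ∀ c : ℝ, 0 < c → ∀ y ∈ Q, c • y ∈ Q)
    (E : Set (Y × ℝ))
    (hE : E = Set.range (fun x => (A x, a' x)) + (-Q) ×ˢ Set.Ici (0 : ℝ)) :
    ((∀ x : X, A x ∈ Q → 0 ≤ a' x) ↔
        ∃ μ : Y →L[ℝ] ℝ, (∀ y ∈ Q, 0 ≤ μ y) ∧ μ.comp A = a') ↔
      (((0 : Y), (-1 : ℝ)) ∈ E ∨ ((0 : Y), (-1 : ℝ)) ∉ closure E) := by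
  obtain ⟨q0, hq0⟩ := hQne
  -- generic membership helper
  have hmem : ∀ (x : X), ∀ q ∈ Q, ∀ r : ℝ, 0 ≤ r →
      ((A x - q, a' x + r) : Y × ℝ) ∈ E := by
    intro x q hq r hr
    rw [hE]
    have heq : ((A x - q, a' x + r) : Y × ℝ) = (A x, a' x) + (-q, r) := by
      simp [Prod.ext_iff, sub_eq_add_neg]
    rw [heq]
    exact Set.add_mem_add (Set.mem_range_self x)
      (Set.mk_mem_prod (Set.neg_mem_neg.mpr hq) hr)
  -- D implies P
  have hD_P : (∃ μ : Y →L[ℝ] ℝ, (∀ y ∈ Q, 0 ≤ μ y) ∧ μ.comp A = a') →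
      (∀ x : X, A x ∈ Q → 0 ≤ a' x) := by
    rintro ⟨μ, hμQ, hμA⟩ x hx
    have h1 : μ (A x) = a' x := by rw [← hμA]; rfl
    rw [← h1]
    exact hμQ _ hx
  -- M implies not P
  have hM_notP : ((0 : Y), (-1 : ℝ)) ∈ E → ¬ (∀ x : X, A x ∈ Q → 0 ≤ a' x) := by
    intro hM hP
    rw [hE] at hM
    obtain ⟨p, ⟨x, hx⟩, w, hw, hsum⟩ := hM
    have h1 : A x + w.1 = 0 := by
      have := congrArg Prod.fst hsum
      simpa [← hx] using this
    have h2 : a' x + w.2 = -1 := by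
      have := congrArg Prod.snd hsum
      simpa [← hx] using this
    have hAx : A x ∈ Q := by
      have : -w.1 ∈ Q := Set.mem_neg.mp hw.1
      have hA : A x = -w.1 := by linear_combination (norm := abel_nf) h1
      rwa [hA]
    have hw2 : (0 : ℝ) ≤ w.2 := hw.2
    have := hP x hAx
    linarith
  -- not P implies M
  have hnotP_M : ¬ (∀ x : X, A x ∈ Q → 0 ≤ a' x) → ((0 : Y), (-1 : ℝ)) ∈ E := by
    intro hP
    push_neg at hP
    obtain ⟨x, hxQ, hxneg⟩ := hP
    set c : ℝ := (-(a' x))⁻¹ with hc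
    have hcpos : 0 < c := by
      rw [hc]; exact inv_pos.mpr (by linarith)
    have hAcx : A (c • x) ∈ Q := by
      rw [map_smul]; exact hQcone c hcpos _ hxQ
    have hax : a' (c • x) = -1 := by
      rw [map_smul, smul_eq_mul, hc]
      field_simp
      rw [div_self (ne_of_lt hxneg)]
    have := hmem (c • x) (A (c • x)) hAcx 0 le_rfl
    simpa [hax] using this
  -- D implies not C
  have hD_notC : (∃ μ : Y →L[ℝ] ℝ, (∀ y ∈ Q, 0 ≤ μ y) ∧ μ.comp A = a') →
      ((0 : Y), (-1 : ℝ)) ∉ closure E := by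
    rintro ⟨μ, hμQ, hμA⟩ hC
    set φ : (Y × ℝ) →L[ℝ] ℝ :=
      (ContinuousLinearMap.snd ℝ Y ℝ) - μ.comp (ContinuousLinearMap.fst ℝ Y ℝ) with hφ
    have hφE : E ⊆ {z | 0 ≤ φ z} := by
      intro z hz
      rw [hE] at hz
      obtain ⟨p, ⟨x, hx⟩, w, hw, hsum⟩ := hz
      have hμAx : μ (A x) = a' x := by rw [← hμA]; rfl
      have hw1 : 0 ≤ μ (-w.1) := hμQ _ (Set.mem_neg.mp hw.1)
      have hw2 : (0 : ℝ) ≤ w.2 := hw.2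
      have hzval : φ z = w.2 + μ (-w.1) := by
        rw [← hsum, ← hx, hφ]
        simp [map_neg, hμAx]
        ring
      simp only [Set.mem_setOf_eq, hzval]
      linarith
    have hclosed : closure E ⊆ {z | 0 ≤ φ z} :=
      closure_minimal hφE (isClosed_le continuous_const φ.continuous)
    have := hclosed hC
    simp only [Set.mem_setOf_eq, hφ] at this
    simp at this
    linarith
  -- not C implies D (separation argument)
  have hnotC_D : ((0 : Y), (-1 : ℝ)) ∉ closure E →
      ∃ μ : Y →L[ℝ] ℝ, (∀ y ∈ Q, 0 ≤ μ y) ∧ μ.comp A = a' := by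
    intro hC
    -- E is convex
    have hEconv : Convex ℝ E := by
      rw [hE]
      refine Convex.add ?_ ((hQconv.neg).prod (convex_Ici 0))
      have : Set.range (fun x : X => ((A x, a' x) : Y × ℝ)) =
          ((A.toLinearMap.prod a'.toLinearMap) '' Set.univ) := by
        rw [Set.image_univ]; rfl
      rw [this]
      exact convex_univ.linear_image _
    -- (0,0) is in the closure of E
    have h00 : ((0 : Y), (0 : ℝ)) ∈ closure E := by
      have htend : Filter.Tendsto (fun n : ℕ => (((n : ℝ) + 1)⁻¹ • q0)) Filter.atTop
          (nhds 0) := by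
        have h1 : Filter.Tendsto (fun n : ℕ => ((n : ℝ) + 1)⁻¹) Filter.atTop (nhds 0) := by
          simpa only [one_div] using tendsto_one_div_add_atTop_nhds_zero_nat (𝕜 := ℝ)
        simpa using h1.smul_const q0
      have htend2 : Filter.Tendsto
          (fun n : ℕ => ((-(((n : ℝ) + 1)⁻¹ • q0), (0 : ℝ)) : Y × ℝ)) Filter.atTop
          (nhds (0, 0)) := by
        have := (htend.neg).prodMk_nhds
          (tendsto_const_nhds : Filter.Tendsto (fun _ : ℕ => (0 : ℝ)) Filter.atTop (nhds 0))
        simpa using this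
      refine mem_closure_of_tendsto htend2 (Filter.Eventually.of_forall fun n => ?_)
      have hpos : (0 : ℝ) < ((n : ℝ) + 1)⁻¹ := by positivity
      have := hmem 0 (((n : ℝ) + 1)⁻¹ • q0) (hQcone _ hpos _ hq0) 0 le_rfl
      simpa using this
    -- separation
    obtain ⟨f, u, hfu, hfE⟩ :=
      geometric_hahn_banach_point_closed (hEconv.closure) isClosed_closure hC
    set α : ℝ := f (0, 1) with hα
    set g : Y →L[ℝ] ℝ := f.comp (ContinuousLinearMap.inl ℝ Y ℝ) with hg
    have hf : ∀ (y : Y) (t : ℝ), f (y, t) = g y + t * α := by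
      intro y t
      have heq : ((y, t) : Y × ℝ) = (y, 0) + t • ((0 : Y), (1 : ℝ)) := by
        simp [Prod.ext_iff]
      rw [heq, map_add, map_smul]
      simp [hg, hα, smul_eq_mul]
    have hu0 : u < 0 := by
      have := hfE _ h00
      rw [hf] at this
      simpa using this
    have hαpos : 0 < α := by
      rw [hf] at hfu
      simp at hfu
      linarith
    -- g is nonpositive on Q
    have hgQ : ∀ q ∈ Q, g q ≤ 0 := by
      intro q hq
      by_contra h
      push_neg at h
      set t : ℝ := α / g q with ht
      have htpos : 0 < t := div_pos hαpos h
      have hmemE := hmem 0 (t • q) (hQcone t htpos q hq) 0 le_rfl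
      have := hfE _ (subset_closure hmemE)
      rw [hf] at this
      have hval : g (A 0 - t • q) = -α := by
        rw [map_sub, map_smul]
        simp [ht, div_mul_cancel₀ _ (ne_of_gt h)]
      rw [hval] at this
      simp at this
      have hfu' : -α < u := by
        have h2 := hfu
        rw [hf] at h2
        simpa using h2
      linarith
    -- the functional x ↦ g (A x) + α * a' x vanishes
    have hL : ∀ x : X, g (A x) + α * a' x = 0 := by
      have hbound : ∀ x : X, u + g q0 < g (A x) + α * a' x := by
        intro x
        have hmemE := hmem x q0 hq0 0 le_rfl
        have := hfE _ (subset_closure hmemE)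
        rw [hf] at this
        rw [map_sub] at this
        nlinarith [this]
      intro x
      by_contra h
      set L : ℝ := g (A x) + α * a' x with hLdef
      have hLt : ∀ t : ℝ, u + g q0 < t * L := by
        intro t
        have := hbound (t • x)
        simpa [map_smul, smul_eq_mul, hLdef, mul_add, mul_assoc, mul_left_comm] using this
      have := hLt ((u + g q0 - 1) / L)
      rw [div_mul_cancel₀ _ h] at this
      linarith
    -- construct μ
    refine ⟨(-α⁻¹) • g, ?_, ?_⟩
    · intro q hq
      have h1 := hgQ q hq
      have h2 : (0 : ℝ) < α⁻¹ := inv_pos.mpr hαpos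
      simp only [ContinuousLinearMap.coe_smul', Pi.smul_apply, smul_eq_mul]
      nlinarith
    · ext x
      have := hL x
      simp only [ContinuousLinearMap.coe_comp', Function.comp_apply,
        ContinuousLinearMap.coe_smul', Pi.smul_apply, smul_eq_mul]
      have hαne : α ≠ 0 := ne_of_gt hαpos
      field_simp
      linarith
  -- assemble
  constructor
  · intro hPD
    by_cases hP : ∀ x : X, A x ∈ Q → 0 ≤ a' x
    · right; exact hD_notC (hPD.mp hP)
    · left; exact hnotP_M hP
  · rintro (hM | hC)
    · have hnP := hM_notP hM
      exact ⟨fun hP => absurd hP hnP, fun hD => absurd (hD_P hD) hnP⟩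
    · exact ⟨fun _ => hnotC_D hC, fun hD => hD_P hD⟩
end

section
/- Let X, Y be real normed spaces, A : X → Y continuous linear, and Q ⊆ Y a nonempty closed convex cone, a' ∈ X*. Then the equivalence [ (∀ x, A x ∈ Q ⟹ ⟨a', x⟩ ≥ 0) ⟺ (∃ μ ∈ Q⁺ with A*μ = a') ] holds if and only if A*(Q⁺) is weak-* closed regarding {a'}, i.e., either a' ∈ A*(Q⁺) or a' is not in the weak-* closure of A*(Q⁺). -/
open Topology Set


section Eval
variable {X : Type*} [NormedAddCommGroup X] [NormedSpace ℝ X]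

/-- Evaluation at `x` as a linear map on the weak-* dual. -/
noncomputable def evalLM (x : X) : WeakDual ℝ X →ₗ[ℝ] ℝ where
  toFun g := g x
  map_add' g h := rfl
  map_smul' c g := rfl

lemma exists_eval (f : WeakDual ℝ X →L[ℝ] ℝ) : ∃ x : X, ∀ g : WeakDual ℝ X, f g = g x := by
  set B := topDualPairing ℝ X
  set p := B.toSeminormFamily with hp
  have hU : f ⁻¹' Metric.ball (0 : ℝ) 1 ∈ 𝓝 (0 : WeakDual ℝ X) := by
    have : Metric.ball (0 : ℝ) 1 ∈ 𝓝 (f 0) := by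
      simpa using Metric.ball_mem_nhds (0 : ℝ) one_pos
    exact f.continuous.continuousAt.preimage_mem_nhds this
  obtain ⟨V, hV, hVU⟩ := (LinearMap.hasBasis_weakBilin B).mem_iff.mp hU
  obtain ⟨s, r, hr, rfl⟩ := p.basisSets_iff.mp hV
  have hker : ∀ g : WeakDual ℝ X, (∀ x ∈ s, g x = 0) → f g = 0 := by
    intro g hg
    by_contra hfg
    have hmem : ∀ c : ℝ, c • g ∈ (s.sup p).ball 0 r := by
      intro c
      refine Iff.mpr (Seminorm.mem_ball_zero (s.sup p)) ?_
      rcases s.eq_empty_or_nonempty with h | h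
      · simp only [h, Finset.sup_empty]; exact hr
      · refine Seminorm.finset_sup_apply_lt hr fun i hi => ?_
        have : g i = 0 := hg i hi
        have he : p i (c • g) = ‖c * g i‖ := rfl
        exact he.trans_lt (by rw [this, mul_zero, norm_zero]; exact hr)
    have hlt : ∀ c : ℝ, |c * f g| < 1 := by
      intro c
      have := hVU (hmem c)
      change f (c • g) ∈ Metric.ball (0 : ℝ) 1 at this
      simp only [mem_preimage, Metric.mem_ball, dist_zero_right, Real.norm_eq_abs] at this
      simpa [map_smul, smul_eq_mul] using this
    have := hlt (1 / f g)
    rw [one_div_mul_cancel hfg] at this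
    norm_num at this
  have hspan : (f : WeakDual ℝ X →ₗ[ℝ] ℝ) ∈
      Submodule.span ℝ (Set.range fun i : s => evalLM (i : X)) := by
    refine mem_span_of_iInf_ker_le_ker ?_
    intro g hg
    simp only [Submodule.mem_iInf, LinearMap.mem_ker] at hg
    have : f g = 0 := hker g fun x hx => hg ⟨x, hx⟩
    simpa [LinearMap.mem_ker] using this
  obtain ⟨c, hc⟩ := (Submodule.mem_span_range_iff_exists_fun ℝ).mp hspan
  refine ⟨∑ i : s, c i • (i : X), fun g => ?_⟩
  have h1 : (∑ i : s, c i • evalLM (i : X)) g = f g := by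
    have h0 := LinearMap.congr_fun hc g
    simpa using h0
  have h2 : g (∑ i : s, c i • (i : X)) = ∑ i : s, c i • g (i : X) := by
    rw [map_sum]
    simp [map_smul]
  rw [h2, ← h1]
  simp only [evalLM, LinearMap.sum_apply, LinearMap.smul_apply, LinearMap.coe_mk,
    AddHom.coe_mk, smul_eq_mul, ContinuousLinearMap.coe_coe]
  rfl

end Eval

section Bipolar
variable {Y : Type*} [NormedAddCommGroup Y] [NormedSpace ℝ Y]

lemma mem_of_forall_dual_nonneg {Q : Set Y} (h0 : (0 : Y) ∈ Q) (hQcl : IsClosed Q)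
    (hQconv : Convex ℝ Q) (hQcone : ∀ c : ℝ, 0 ≤ c → ∀ y ∈ Q, c • y ∈ Q) (y : Y)
    (hy : ∀ μ : Y →L[ℝ] ℝ, (∀ z ∈ Q, 0 ≤ μ z) → 0 ≤ μ y) : y ∈ Q := by
  by_contra hyQ
  obtain ⟨ν, u, hνy, hνQ⟩ := geometric_hahn_banach_point_closed hQconv hQcl hyQ
  have hu : u < 0 := by simpa using hνQ 0 h0
  have hpos : ∀ z ∈ Q, 0 ≤ ν z := by
    intro z hz
    by_contra hneg
    push_neg at hneg
    have hc : 0 < u / ν z := div_pos_of_neg_of_neg hu hneg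
    have hmem := hQcone (u / ν z + 1) (by linarith) z hz
    have := hνQ _ hmem
    rw [map_smul, smul_eq_mul, add_mul, div_mul_cancel₀ _ hneg.ne, one_mul] at this
    linarith
  have := hy ν hpos
  linarith

end Bipolar

/-- Corollary 6 (homogeneous Farkas lemma): for a nonempty closed convex cone `Q ⊆ Y`
and `a' ∈ X*`, the equivalence "[(∀ x, A x ∈ Q → ⟨a', x⟩ ≥ 0) ⟺ (∃ μ ∈ Q⁺, A*μ = a')]"
holds iff `A*(Q⁺)` is weak-* closed regarding `{a'}`. -/
theorem farkas_homogeneous_dual_characterization {X Y : Type*}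
    [NormedAddCommGroup X] [NormedSpace ℝ X] [NormedAddCommGroup Y] [NormedSpace ℝ Y]
    (A : X →L[ℝ] Y) (a' : X →L[ℝ] ℝ) (Q : Set Y)
    (hQne : Q.Nonempty) (hQcl : IsClosed Q) (hQconv : Convex ℝ Q)
    (hQcone : ∀ c : ℝ, 0 ≤ c → ∀ y ∈ Q, c • y ∈ Q)
    (AQplus : Set (WeakDual ℝ X))
    (hAQ : AQplus = {g : WeakDual ℝ X |
        ∃ μ : Y →L[ℝ] ℝ, (∀ y ∈ Q, 0 ≤ μ y) ∧ g = toWeakDual (μ.comp A)}) :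
    ((∀ x : X, A x ∈ Q → 0 ≤ a' x) ↔
        ∃ μ : Y →L[ℝ] ℝ, (∀ y ∈ Q, 0 ≤ μ y) ∧ μ.comp A = a') ↔
      (toWeakDual a' ∈ AQplus ∨ toWeakDual a' ∉ closure AQplus) := by
  have h0Q : (0 : Y) ∈ Q := by
    obtain ⟨y, hy⟩ := hQne
    simpa using hQcone 0 le_rfl y hy
  -- easy direction: existence of μ implies the primal inequality
  have heasy : (∃ μ : Y →L[ℝ] ℝ, (∀ y ∈ Q, 0 ≤ μ y) ∧ μ.comp A = a') →
      ∀ x : X, A x ∈ Q → 0 ≤ a' x := by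
    rintro ⟨μ, hμ, rfl⟩ x hx
    exact hμ _ hx
  -- every element of the closure of AQplus satisfies the primal inequality
  have hclsub : ∀ g : WeakDual ℝ X, g ∈ closure AQplus → ∀ x : X, A x ∈ Q → 0 ≤ g x := by
    intro g hg x hx
    have hclosed : IsClosed {h : WeakDual ℝ X | 0 ≤ h x} :=
      isClosed_le continuous_const (WeakDual.eval_continuous x)
    have hsub : AQplus ⊆ {h : WeakDual ℝ X | 0 ≤ h x} := by
      rw [hAQ]
      rintro h ⟨μ, hμ, rfl⟩
      exact hμ _ hx
    exact closure_minimal hsub hclosed hg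
  -- AQplus is convex
  have hconv : Convex ℝ AQplus := by
    rw [hAQ]
    rintro g₁ ⟨μ₁, hμ₁, rfl⟩ g₂ ⟨μ₂, hμ₂, rfl⟩ a b ha hb hab
    refine ⟨a • μ₁ + b • μ₂, fun y hy => ?_, ?_⟩
    · have := hμ₁ y hy; have := hμ₂ y hy
      simp only [ContinuousLinearMap.add_apply, ContinuousLinearMap.coe_smul',
        Pi.smul_apply, smul_eq_mul]
      nlinarith
    · show a • toWeakDual (μ₁.comp A) + b • toWeakDual (μ₂.comp A) =
        toWeakDual ((a • μ₁ + b • μ₂).comp A)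
      simp only [toWeakDual, ContinuousLinearMap.add_comp, ContinuousLinearMap.smul_comp]
      rfl
  -- key: the primal inequality puts a' in the weak-* closure of AQplus
  have hlcs : LocallyConvexSpace ℝ (WeakDual ℝ X) :=
    WeakBilin.locallyConvexSpace (B := topDualPairing ℝ X)
  have hkey : (∀ x : X, A x ∈ Q → 0 ≤ a' x) → toWeakDual a' ∈ closure AQplus := by
    intro hprimal
    by_contra hcl
    obtain ⟨f, u, hfa, hfQ⟩ :=
      geometric_hahn_banach_point_closed hconv.closure isClosed_closure hcl
    obtain ⟨x, hx⟩ := exists_eval f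
    have h0A : (0 : WeakDual ℝ X) ∈ AQplus := by
      rw [hAQ]
      refine ⟨0, fun y _ => le_rfl, ?_⟩
      show (0 : WeakDual ℝ X) = toWeakDual ((0 : Y →L[ℝ] ℝ).comp A)
      simp only [toWeakDual, ContinuousLinearMap.zero_comp]
      rfl
    have hu : u < 0 := by
      have := hfQ 0 (subset_closure h0A)
      simpa using this
    have hAxQ : A x ∈ Q := by
      refine mem_of_forall_dual_nonneg h0Q hQcl hQconv hQcone _ ?_
      intro μ hμ
      by_contra hneg
      push_neg at hneg
      have hc : 0 < u / μ (A x) := div_pos_of_neg_of_neg hu hneg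
      have hcpos : (0 : ℝ) ≤ u / μ (A x) + 1 := by linarith
      have hmem : toWeakDual (((u / μ (A x) + 1) • μ).comp A) ∈ AQplus := by
        rw [hAQ]
        exact ⟨(u / μ (A x) + 1) • μ, fun y hy => by
          simpa [smul_eq_mul] using mul_nonneg hcpos (hμ y hy), rfl⟩
      have hgt := hfQ _ (subset_closure hmem)
      rw [hx] at hgt
      have happ : (toWeakDual (((u / μ (A x) + 1) • μ).comp A)) x
          = (u / μ (A x) + 1) * μ (A x) := rfl
      rw [happ, add_mul, div_mul_cancel₀ _ hneg.ne, one_mul] at hgt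
      linarith
    have h1 : 0 ≤ a' x := hprimal x hAxQ
    have h2 : f (toWeakDual a') = a' x := hx (toWeakDual a')
    linarith
  constructor
  · intro hiff
    by_cases h : toWeakDual a' ∈ closure AQplus
    · left
      have hprimal : ∀ x : X, A x ∈ Q → 0 ≤ a' x := fun x hx => hclsub _ h x hx
      obtain ⟨μ, hμ, hc⟩ := hiff.mp hprimal
      rw [hAQ]
      exact ⟨μ, hμ, by rw [hc]⟩
    · right; exact h
  · intro hdisj
    constructor
    · intro hprimal
      rcases hdisj with h | h
      · rw [hAQ] at h
        obtain ⟨μ, hμ, hg⟩ := h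
        exact ⟨μ, hμ, (congrArg id hg).symm⟩
      · exact absurd (hkey hprimal) h
    · exact heasy
end

section
/- Let X, Y be real normed spaces, A : X → Y continuous linear, C ⊆ X and D ⊆ Y nonempty closed convex sets, f : X → ℝ ∪ {+∞} proper lower semicontinuous convex with C ∩ A⁻¹(D) ∩ dom f ≠ ∅. Let K := epi σ_C + {(A*λ, σ_D(λ)) : λ ∈ Y*, σ_D(λ) < ∞}. Then the equivalence [ (∀ x ∈ C ∩ A⁻¹(D), f(x) ≥ 0) ⟺ (∃ u', v' ∈ X*, λ ∈ Y* with u' + v' = −A*λ and f*(u') + σ_C(v') + σ_D(λ) ≤ 0) ] holds if and only if epi f* + K is weak-* closed regarding {(0, 0)} in X* × ℝ. -/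
set_option maxHeartbeats 4000000

open Pointwise

section Aux

open Set

noncomputable instance inst_s14 {X : Type*} [NormedAddCommGroup X] [NormedSpace ℝ X] :
    LocallyConvexSpace ℝ (WeakDual ℝ X) := WeakBilin.locallyConvexSpace

/-- Every continuous linear functional on the weak-* dual is evaluation at a point. -/
theorem weakdual_repr {X : Type*} [NormedAddCommGroup X] [NormedSpace ℝ X]
    (ψ : WeakDual ℝ X →L[ℝ] ℝ) :
    ∃ x0 : X, ∀ u : WeakDual ℝ X, ψ u = u x0 := by
  have hcont : Continuous ψ := ψ.continuous
  have h0 : ψ ⁻¹' (Metric.ball 0 1) ∈ nhds (0 : WeakDual ℝ X) := by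
    refine hcont.continuousAt.preimage_mem_nhds ?_
    simp [Metric.ball_mem_nhds]
  have hbasis := LinearMap.hasBasis_weakBilin (topDualPairing ℝ X)
  have h0 := hbasis.mem_iff.mp h0
  obtain ⟨U, hU, hUsub⟩ := h0
  have hU' : U ∈ (topDualPairing ℝ X).toSeminormFamily.basisSets := hU
  rw [SeminormFamily.basisSets_iff] at hU'
  obtain ⟨s, r, hr, rfl⟩ := hU'
  have hker : ∀ u : WeakDual ℝ X, (∀ x ∈ s, u x = 0) → ψ u = 0 := by
    intro u hu
    by_contra hne
    have hmem : ∀ t : ℝ,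
        (t • u) ∈ Seminorm.ball (s.sup ((topDualPairing ℝ X).toSeminormFamily)) 0 r := by
      intro t
      rw [Seminorm.ball_finset_sup_eq_iInter _ _ _ hr]
      refine Set.mem_iInter₂.2 fun x hx => ?_
      refine (Seminorm.mem_ball_zero _).2 ?_
      show ‖(t • u : WeakDual ℝ X) x‖ < r
      have : (t • u : WeakDual ℝ X) x = t * u x := rfl
      rw [this, hu x hx, mul_zero, norm_zero]
      exact hr
    have h2 : (2 / ψ u) • u ∈ ψ ⁻¹' Metric.ball 0 1 := hUsub (hmem (2 / ψ u))
    simp only [id_eq, Set.mem_preimage, Metric.mem_ball, dist_zero_right, map_smul,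
      smul_eq_mul, Real.norm_eq_abs] at h2
    rw [div_mul_cancel₀ 2 hne] at h2
    norm_num at h2
  set L : {x // x ∈ s} → (WeakDual ℝ X →ₗ[ℝ] ℝ) := fun x => (topDualPairing ℝ X).flip x.1 with hL
  have hsub : ⨅ i, LinearMap.ker (L i) ≤ LinearMap.ker (ψ : WeakDual ℝ X →ₗ[ℝ] ℝ) := by
    intro u hu
    simp only [Submodule.mem_iInf, LinearMap.mem_ker] at hu ⊢
    exact hker u fun x hx => hu ⟨x, hx⟩
  have hspan := mem_span_of_iInf_ker_le_ker hsub
  rw [Finsupp.mem_span_range_iff_exists_finsupp] at hspan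
  obtain ⟨c, hc⟩ := hspan
  refine ⟨c.sum fun i a => a • (i.1 : X), fun u => ?_⟩
  have this' : (c.sum fun i a => a • L i) u = ψ u := LinearMap.congr_fun hc u
  rw [← this', Finsupp.sum, Finsupp.sum, map_sum, LinearMap.coe_sum, Finset.sum_apply]
  refine Finset.sum_congr rfl fun i _ => ?_
  show c i * u i.1 = u (c i • (i.1 : X))
  rw [map_smul]
  rfl

/-- A point satisfying all valid linear inequalities of a closed convex set is in it. -/
theorem mem_of_all_halfspaces {E : Type*} [NormedAddCommGroup E] [NormedSpace ℝ E]
    {C : Set E} (hCcl : IsClosed C) (hCconv : Convex ℝ C)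
    {z : E} (h : ∀ (v : E →L[ℝ] ℝ) (s : ℝ), (∀ x ∈ C, v x ≤ s) → v z ≤ s) : z ∈ C := by
  by_contra hz
  obtain ⟨φ, u, hu1, hu2⟩ := geometric_hahn_banach_closed_point hCconv hCcl hz
  exact absurd (h φ u fun x hx => (hu1 x hx).le) (by linarith)

theorem prod_decomp {E : Type*} [NormedAddCommGroup E] [NormedSpace ℝ E]
    (φ : (E × ℝ) →L[ℝ] ℝ) (x : E) (r : ℝ) :
    φ (x, r) = φ.comp (ContinuousLinearMap.inl ℝ E ℝ) x + r * φ (0, 1) := by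
  have : (x, r) = (x, (0:ℝ)) + r • ((0:E), (1:ℝ)) := by
    simp [Prod.ext_iff]
  rw [this, map_add, map_smul, smul_eq_mul]
  rfl

theorem wprod_decomp {X : Type*} [NormedAddCommGroup X] [NormedSpace ℝ X]
    (φ : (WeakDual ℝ X × ℝ) →L[ℝ] ℝ) (x : WeakDual ℝ X) (r : ℝ) :
    φ (x, r) = φ.comp (ContinuousLinearMap.inl ℝ (WeakDual ℝ X) ℝ) x + r * φ (0, 1) := by
  have : (x, r) = (x, (0:ℝ)) + r • ((0 : WeakDual ℝ X), (1:ℝ)) := by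
    simp [Prod.ext_iff]
  rw [this, map_add, map_smul, smul_eq_mul]
  rfl

theorem scale_nonneg {u B α : ℝ} (h : ∀ τ : ℝ, 0 ≤ τ → u < B + τ * α) : 0 ≤ α := by
  by_contra hneg
  push_neg at hneg
  have hτ := h (max 0 ((u - B) / α)) (le_max_left _ _)
  have h4 : (u - B) / α ≤ max 0 ((u - B) / α) := le_max_right _ _
  rw [div_le_iff_of_neg hneg] at h4
  linarith

/-- separation of a point from the epigraph, normalized form -/
theorem sep_epi {E : Type*} [NormedAddCommGroup E] [NormedSpace ℝ E] {S : Set E} {f : E → ℝ}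
    (hconv : Convex ℝ {p : E × ℝ | p.1 ∈ S ∧ f p.1 ≤ p.2})
    (hlsc : IsClosed {p : E × ℝ | p.1 ∈ S ∧ f p.1 ≤ p.2})
    {x1 : E} (hx1 : x1 ∈ S) {z : E} {M : ℝ}
    (hzM : (z, M) ∉ {p : E × ℝ | p.1 ∈ S ∧ f p.1 ≤ p.2}) :
    ∃ (g : E →L[ℝ] ℝ) (c u : ℝ), 0 ≤ c ∧ g z + M * c < u ∧
      ∀ x ∈ S, ∀ ρ : ℝ, f x ≤ ρ → u < g x + ρ * c := by
  obtain ⟨φ, u, h1, h2⟩ := geometric_hahn_banach_point_closed hconv hlsc hzM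
  set g := φ.comp (ContinuousLinearMap.inl ℝ E ℝ) with hg
  set c := φ ((0:E), (1:ℝ)) with hc
  have hrep : ∀ x r, φ (x, r) = g x + r * c := fun x r => prod_decomp φ x r
  have hcnn : 0 ≤ c := by
    refine scale_nonneg (u := u) (B := g x1 + f x1 * c) fun n hn => ?_
    have := h2 (x1, f x1 + n) ⟨hx1, show f x1 ≤ f x1 + n by linarith⟩
    rw [hrep] at this
    nlinarith
  refine ⟨g, c, u, hcnn, by rw [← hrep]; exact h1, fun x hx ρ hρ => ?_⟩
  have := h2 (x, ρ) ⟨hx, hρ⟩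
  rwa [hrep] at this

theorem exists_affine_minorant {E : Type*} [NormedAddCommGroup E] [NormedSpace ℝ E]
    {S : Set E} {f : E → ℝ} (hf : ConvexOn ℝ S f)
    (hlsc : IsClosed {p : E × ℝ | p.1 ∈ S ∧ f p.1 ≤ p.2})
    {x1 : E} (hx1 : x1 ∈ S) :
    ∃ (u0 : E →L[ℝ] ℝ) (r0 : ℝ), ∀ v ∈ S, u0 v - f v ≤ r0 := by
  have hnm : (x1, f x1 - 1) ∉ {p : E × ℝ | p.1 ∈ S ∧ f p.1 ≤ p.2} := by
    intro hmem
    have := hmem.2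
    simp only at this
    linarith
  obtain ⟨g, c, u, hcnn, hlt, hbnd⟩ := sep_epi hf.convex_epigraph hlsc hx1 hnm
  have hcpos : 0 < c := by
    rcases hcnn.lt_or_eq with h | h
    · exact h
    · exfalso
      have h1 := hbnd x1 hx1 (f x1) le_rfl
      rw [← h] at h1 hlt
      simp only [mul_zero, add_zero] at h1 hlt
      linarith
  refine ⟨-(c⁻¹) • g, -u / c, fun v hv => ?_⟩
  have hb := hbnd v hv (f v) le_rfl
  have happ : (-(c⁻¹) • g) v = -(c⁻¹) * g v := rfl
  rw [happ, neg_div]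
  have hmul := mul_le_mul_of_nonneg_left hb.le (inv_nonneg.mpr hcpos.le)
  have hexp : c⁻¹ * (g v + f v * c) = c⁻¹ * g v + f v := by
    field_simp
  rw [hexp] at hmul
  have : c⁻¹ * u = u / c := by rw [div_eq_inv_mul]
  linarith

/-- the biconjugate bound: if `u z - r ≤ M` for all affine minorants, then `z ∈ S` and
`f z ≤ M`. -/
theorem biconj_le {E : Type*} [NormedAddCommGroup E] [NormedSpace ℝ E]
    {S : Set E} {f : E → ℝ} (hf : ConvexOn ℝ S f)
    (hlsc : IsClosed {p : E × ℝ | p.1 ∈ S ∧ f p.1 ≤ p.2})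
    {x1 : E} (hx1 : x1 ∈ S) (z : E) (M : ℝ)
    (H : ∀ (u : E →L[ℝ] ℝ) (r : ℝ), (∀ v ∈ S, u v - f v ≤ r) → u z - r ≤ M) :
    z ∈ S ∧ f z ≤ M := by
  by_contra hzM
  have hnm : (z, M) ∉ {p : E × ℝ | p.1 ∈ S ∧ f p.1 ≤ p.2} := hzM
  obtain ⟨g, c, u, hcnn, hlt, hbnd⟩ := sep_epi hf.convex_epigraph hlsc hx1 hnm
  rcases hcnn.lt_or_eq with hcpos | hczero
  · have hci : c * c⁻¹ = 1 := mul_inv_cancel₀ hcpos.ne'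
    have hbound : ∀ v ∈ S, (-(c⁻¹) • g) v - f v ≤ -u / c := by
      intro v hv
      have hb := hbnd v hv (f v) le_rfl
      have happ : (-(c⁻¹) • g) v = -(c⁻¹) * g v := rfl
      rw [happ, neg_div]
      have hmul := mul_le_mul_of_nonneg_left hb.le (inv_nonneg.mpr hcpos.le)
      have hexp : c⁻¹ * (g v + f v * c) = c⁻¹ * g v + f v := by field_simp
      rw [hexp] at hmul
      have : c⁻¹ * u = u / c := by rw [div_eq_inv_mul]
      linarith
    have hH := H _ _ hbound
    have happ : (-(c⁻¹) • g) z = -(c⁻¹) * g z := rfl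
    rw [happ] at hH
    have h5 : u / c ≤ c⁻¹ * g z + M := by
      have hnd : -u / c = -(u / c) := neg_div _ _
      rw [hnd] at hH
      have : u / c = c⁻¹ * u := by rw [div_eq_inv_mul]
      linarith
    have h6 := mul_le_mul_of_nonneg_left h5 hcpos.le
    have h7 : c * (u / c) = u := by field_simp
    have h8 : c * (c⁻¹ * g z + M) = g z + c * M := by field_simp
    rw [h7, h8] at h6
    nlinarith
  · rw [← hczero] at hlt hbnd
    simp only [mul_zero, add_zero] at hlt hbnd
    obtain ⟨u0, r0, hu0⟩ := exists_affine_minorant hf hlsc hx1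
    have hpos : 0 < u - g z := by linarith
    set t := max 0 ((M - u0 z + r0 + 1) / (u - g z)) with ht
    have htnn : 0 ≤ t := le_max_left _ _
    have hbound : ∀ v ∈ S, (u0 - t • g) v - f v ≤ r0 - t * u := by
      intro v hv
      have h1 := hu0 v hv
      have h2 := hbnd v hv (f v) le_rfl
      have happ : (u0 - t • g) v = u0 v - t * g v := rfl
      rw [happ]
      nlinarith
    have hH := H _ _ hbound
    have happ : (u0 - t • g) z = u0 z - t * g z := rfl
    rw [happ] at hH
    have h4 : (M - u0 z + r0 + 1) / (u - g z) ≤ t := le_max_right _ _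
    have h5 := mul_le_mul_of_nonneg_right h4 hpos.le
    rw [div_mul_cancel₀ _ hpos.ne'] at h5
    nlinarith

end Aux

/-- Theorem 3 (3rd characterization of Farkas' Lemma).  The proper lsc convex function
`f : X → ℝ ∪ {+∞}` is modelled by its effective domain `S` and a real-valued `f` convex on
`S` with closed epigraph.  With `K := epi σ_C + Λ`, the equivalence
"[(∀ x ∈ C ∩ A⁻¹(D), f(x) ≥ 0) ⟺ (∃ u', v', λ with u' + v' = −A*λ and
f*(u') + σ_C(v') + σ_D(λ) ≤ 0)]" holds iff `epi f* + K` is weak-* closed regarding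
`{(0, 0)}` in `X* × ℝ`. -/
theorem farkas_third_characterization {X Y : Type*}
    [NormedAddCommGroup X] [NormedSpace ℝ X] [NormedAddCommGroup Y] [NormedSpace ℝ Y]
    (A : X →L[ℝ] Y) (C : Set X) (D : Set Y)
    (hCne : C.Nonempty) (hCcl : IsClosed C) (hCconv : Convex ℝ C)
    (hDne : D.Nonempty) (hDcl : IsClosed D) (hDconv : Convex ℝ D)
    (S : Set X) (f : X → ℝ) (hf : ConvexOn ℝ S f)
    (hlsc : IsClosed {p : X × ℝ | p.1 ∈ S ∧ f p.1 ≤ p.2})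
    (hfeas : (C ∩ A ⁻¹' D ∩ S).Nonempty)
    (epif K : Set (WeakDual ℝ X × ℝ))
    (hepif : epif = {p : WeakDual ℝ X × ℝ | ∀ v ∈ S, p.1 v - f v ≤ p.2})
    (hK : K = {p : WeakDual ℝ X × ℝ | ∀ x ∈ C, p.1 x ≤ p.2}
        + {p : WeakDual ℝ X × ℝ | ∃ l : Y →L[ℝ] ℝ, BddAbove ((fun y => l y) '' D) ∧
            p = (toWeakDual (l.comp A), sSup ((fun y => l y) '' D))}) :
    ((∀ x ∈ C ∩ A ⁻¹' D ∩ S, 0 ≤ f x) ↔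
        ∃ (u' v' : X →L[ℝ] ℝ) (l : Y →L[ℝ] ℝ) (r s t : ℝ),
          u' + v' = -(l.comp A) ∧
          (∀ v ∈ S, u' v - f v ≤ r) ∧ (∀ x ∈ C, v' x ≤ s) ∧ (∀ d ∈ D, l d ≤ t) ∧
          r + s + t ≤ 0) ↔
      (((0 : WeakDual ℝ X), (0 : ℝ)) ∈ epif + K ∨
        ((0 : WeakDual ℝ X), (0 : ℝ)) ∉ closure (epif + K)) := by
  classical
  obtain ⟨xb, ⟨hbC, hbD⟩, hbS⟩ := hfeas
  obtain ⟨u0, r0, hu0⟩ := exists_affine_minorant hf hlsc hbS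
  set EpiC : Set (WeakDual ℝ X × ℝ) := {p : WeakDual ℝ X × ℝ | ∀ x ∈ C, p.1 x ≤ p.2} with hEpiC
  set Lam : Set (WeakDual ℝ X × ℝ) :=
    {p : WeakDual ℝ X × ℝ | ∃ l : Y →L[ℝ] ℝ, BddAbove ((fun y => l y) '' D) ∧
      p = (toWeakDual (l.comp A), sSup ((fun y => l y) '' D))} with hLam
  have hmem3 : ∀ a b c : WeakDual ℝ X × ℝ, a ∈ epif → b ∈ EpiC → c ∈ Lam →
      a + (b + c) ∈ epif + K := by
    intro a b c ha hb hc
    rw [hK]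
    exact Set.add_mem_add ha (Set.add_mem_add hb hc)
  have hzeroC : ((0 : WeakDual ℝ X), (0 : ℝ)) ∈ EpiC := by
    intro x hx
    show (0 : WeakDual ℝ X) x ≤ (0 : ℝ)
    exact le_rfl
  have himg0 : (fun y => (0 : Y →L[ℝ] ℝ) y) '' D = {0} := by
    have e : (fun y => (0 : Y →L[ℝ] ℝ) y) = fun _ : Y => (0 : ℝ) := rfl
    rw [e]
    exact Set.Nonempty.image_const hDne 0
  have hbdd0 : BddAbove ((fun y => (0 : Y →L[ℝ] ℝ) y) '' D) := by
    rw [himg0]; exact bddAbove_singleton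
  have hsSup0 : sSup ((fun y => (0 : Y →L[ℝ] ℝ) y) '' D) = 0 := by
    rw [himg0]; exact csSup_singleton 0
  have hzeroL : ((0 : WeakDual ℝ X), (0 : ℝ)) ∈ Lam := by
    refine ⟨0, hbdd0, ?_⟩
    rw [hsSup0]
    refine Prod.ext_iff.mpr ⟨?_, rfl⟩
    show (0 : WeakDual ℝ X) = toWeakDual ((0 : Y →L[ℝ] ℝ).comp A)
    rw [ContinuousLinearMap.zero_comp]
    rfl
  have hLmem : ∀ (l : Y →L[ℝ] ℝ) (t : ℝ), (∀ d ∈ D, l d ≤ t) →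
      BddAbove ((fun y => l y) '' D) ∧ sSup ((fun y => l y) '' D) ≤ t := by
    intro l t hlt
    have hb : BddAbove ((fun y => l y) '' D) := by
      refine ⟨t, ?_⟩
      rintro w ⟨d, hd, rfl⟩
      exact hlt d hd
    refine ⟨hb, csSup_le (hDne.image _) ?_⟩
    rintro w ⟨d, hd, rfl⟩
    exact hlt d hd
  have hu0' : ((u0 : WeakDual ℝ X), r0) ∈ epif := by
    rw [hepif]
    intro v hv
    exact hu0 v hv
  have key1 : (((0 : WeakDual ℝ X), (0 : ℝ)) ∈ epif + K) ↔
      (∃ (u' v' : X →L[ℝ] ℝ) (l : Y →L[ℝ] ℝ) (r s t : ℝ),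
          u' + v' = -(l.comp A) ∧
          (∀ v ∈ S, u' v - f v ≤ r) ∧ (∀ x ∈ C, v' x ≤ s) ∧ (∀ d ∈ D, l d ≤ t) ∧
          r + s + t ≤ 0) := by
    constructor
    · intro h
      rw [hK, Set.mem_add] at h
      obtain ⟨a, ha, q, hq, hsum⟩ := h
      rw [Set.mem_add] at hq
      obtain ⟨b, hb, cc, hc, rfl⟩ := hq
      obtain ⟨l, hbdd, rfl⟩ := hc
      have h1 : a.1 + (b.1 + toWeakDual (l.comp A)) = 0 := congrArg Prod.fst hsum
      have h2 : a.2 + (b.2 + sSup ((fun y => l y) '' D)) = 0 := congrArg Prod.snd hsum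
      rw [hepif] at ha
      refine ⟨a.1, b.1, l, a.2, b.2, sSup ((fun y => l y) '' D), ?_, ?_, ?_, ?_, ?_⟩
      · rw [← add_assoc] at h1
        exact eq_neg_of_add_eq_zero_left h1
      · exact ha
      · exact hb
      · intro d hd
        exact le_csSup hbdd ⟨d, hd, rfl⟩
      · linarith [h2]
    · rintro ⟨u', v', l, r, s, t, heq, hrb, hsb, htb, hsum⟩
      obtain ⟨hbdd, hle⟩ := hLmem l t htb
      set tt := sSup ((fun y => l y) '' D) with htt
      have hamem : ((u' : WeakDual ℝ X), -(s + tt)) ∈ epif := by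
        rw [hepif]
        intro v hv
        have := hrb v hv
        show u' v - f v ≤ -(s + tt)
        linarith
      have hbmem : ((v' : WeakDual ℝ X), s) ∈ EpiC := hsb
      have hcmem : ((toWeakDual (l.comp A)), tt) ∈ Lam := ⟨l, hbdd, rfl⟩
      have hs0 : (((u', -(s + tt)) : WeakDual ℝ X × ℝ)) + ((((v', s) : WeakDual ℝ X × ℝ)) +
          ((toWeakDual (l.comp A)), tt)) = ((0 : WeakDual ℝ X), (0 : ℝ)) := by
        refine Prod.ext_iff.mpr ⟨?_, ?_⟩
        · show u' + (v' + l.comp A) = 0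
          rw [← add_assoc, heq, neg_add_cancel]
        · show -(s + tt) + (s + tt) = 0
          ring
      rw [← hs0]
      exact hmem3 _ _ _ hamem hbmem hcmem
  have key2 : (((0 : WeakDual ℝ X), (0 : ℝ)) ∈ closure (epif + K)) ↔
      (∀ x ∈ C ∩ A ⁻¹' D ∩ S, 0 ≤ f x) := by
    constructor
    · intro hcl x hx
      obtain ⟨⟨hxC, hxD⟩, hxS⟩ := hx
      have hTcl : IsClosed {p : WeakDual ℝ X × ℝ | p.1 x - p.2 ≤ f x} := by
        apply isClosed_le
        · exact ((WeakDual.eval_continuous x).comp continuous_fst).sub continuous_snd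
        · exact continuous_const
      have hsub : epif + K ⊆ {p : WeakDual ℝ X × ℝ | p.1 x - p.2 ≤ f x} := by
        intro p hp
        rw [hK, Set.mem_add] at hp
        obtain ⟨a, ha, q, hq, rfl⟩ := hp
        rw [Set.mem_add] at hq
        obtain ⟨b, hb, cc, hc, rfl⟩ := hq
        obtain ⟨l, hbdd, rfl⟩ := hc
        rw [hepif] at ha
        have h1 := ha x hxS
        have h2 := hb x hxC
        have h3 : l (A x) ≤ sSup ((fun y => l y) '' D) := le_csSup hbdd ⟨A x, hxD, rfl⟩
        show (a + (b + (toWeakDual (l.comp A), sSup ((fun y => l y) '' D)))).1 x -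
            (a + (b + (toWeakDual (l.comp A), sSup ((fun y => l y) '' D)))).2 ≤ f x
        have e1 : (a + (b + (toWeakDual (l.comp A), sSup ((fun y => l y) '' D)))).1 x =
            a.1 x + (b.1 x + l (A x)) := rfl
        have e2 : (a + (b + (toWeakDual (l.comp A), sSup ((fun y => l y) '' D)))).2 =
            a.2 + (b.2 + sSup ((fun y => l y) '' D)) := rfl
        rw [e1, e2]
        linarith
      have hmemT := closure_minimal hsub hTcl hcl
      have h0 : ((0 : WeakDual ℝ X)) x - (0 : ℝ) ≤ f x := hmemT
      have e0 : (0 : WeakDual ℝ X) x = 0 := rfl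
      rw [e0] at h0
      linarith
    · intro hprimal
      by_contra hncl
      have hepifconv : Convex ℝ epif := by
        rw [hepif]
        intro p hp q hq α β hα hβ hαβ
        intro v hv
        have happ : (α • p + β • q).1 v = α * p.1 v + β * q.1 v := rfl
        have h2 : (α • p + β • q).2 = α * p.2 + β * q.2 := rfl
        rw [happ, h2]
        have e1 := mul_le_mul_of_nonneg_left (hp v hv) hα
        have e2 := mul_le_mul_of_nonneg_left (hq v hv) hβ
        have e3 : α * f v + β * f v = f v := by rw [← add_mul, hαβ, one_mul]
        linarith
      have hEpiCconv : Convex ℝ EpiC := by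
        intro p hp q hq α β hα hβ hαβ
        intro x hx
        have happ : (α • p + β • q).1 x = α * p.1 x + β * q.1 x := rfl
        have h2 : (α • p + β • q).2 = α * p.2 + β * q.2 := rfl
        rw [happ, h2]
        have e1 := mul_le_mul_of_nonneg_left (hp x hx) hα
        have e2 := mul_le_mul_of_nonneg_left (hq x hx) hβ
        linarith
      have hW : Convex ℝ (epif + EpiC) := hepifconv.add hEpiCconv
      have hWup : ∀ w ∈ epif + EpiC, ∀ e : ℝ, 0 ≤ e →
          w + ((0 : WeakDual ℝ X), e) ∈ epif + EpiC := by
        intro w hw e he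
        rw [Set.mem_add] at hw
        obtain ⟨a, ha, b, hb, rfl⟩ := hw
        have ha' : a + ((0 : WeakDual ℝ X), e) ∈ epif := by
          rw [hepif] at ha ⊢
          intro v hv
          have := ha v hv
          have happ : (a + ((0 : WeakDual ℝ X), e)).1 v = a.1 v := by
            show a.1 v + (0 : WeakDual ℝ X) v = a.1 v
            show a.1 v + 0 = a.1 v
            ring
          have h2 : (a + ((0 : WeakDual ℝ X), e)).2 = a.2 + e := rfl
          rw [happ, h2]
          linarith
        rw [add_right_comm]
        exact Set.add_mem_add ha' hb
      have hassoc : epif + K = (epif + EpiC) + Lam := by rw [hK, ← add_assoc]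
      have hconv : Convex ℝ (epif + K) := by
        rw [hassoc]
        intro p hp q hq α β hα hβ hαβ
        rw [Set.mem_add] at hp hq
        obtain ⟨w1, hw1, c1, hc1, rfl⟩ := hp
        obtain ⟨w2, hw2, c2, hc2, rfl⟩ := hq
        obtain ⟨l1, hb1, rfl⟩ := hc1
        obtain ⟨l2, hb2, rfl⟩ := hc2
        set T1 := sSup ((fun y => l1 y) '' D) with hT1
        set T2 := sSup ((fun y => l2 y) '' D) with hT2
        set l : Y →L[ℝ] ℝ := α • l1 + β • l2 with hl
        have hub : ∀ d ∈ D, l d ≤ α * T1 + β * T2 := by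
          intro d hd
          have h1 : l1 d ≤ T1 := le_csSup hb1 ⟨d, hd, rfl⟩
          have h2 : l2 d ≤ T2 := le_csSup hb2 ⟨d, hd, rfl⟩
          have happ : l d = α * l1 d + β * l2 d := rfl
          rw [happ]
          have e1 := mul_le_mul_of_nonneg_left h1 hα
          have e2 := mul_le_mul_of_nonneg_left h2 hβ
          linarith
        obtain ⟨hbdd, hle⟩ := hLmem l (α * T1 + β * T2) hub
        set tl := sSup ((fun y => l y) '' D) with htl
        have hwmem : α • w1 + β • w2 + ((0 : WeakDual ℝ X), α * T1 + β * T2 - tl) ∈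
            epif + EpiC :=
          hWup _ (hW hw1 hw2 hα hβ hαβ) _ (by linarith)
        have hcmem : ((toWeakDual (l.comp A)), tl) ∈ Lam := ⟨l, hbdd, rfl⟩
        have heqp : α • (w1 + (toWeakDual (l1.comp A), T1)) +
            β • (w2 + (toWeakDual (l2.comp A), T2)) =
            (α • w1 + β • w2 + ((0 : WeakDual ℝ X), α * T1 + β * T2 - tl)) +
              ((toWeakDual (l.comp A)), tl) := by
          refine Prod.ext_iff.mpr ⟨?_, ?_⟩
          · apply DFunLike.ext
            intro x
            show α * (w1.1 x + l1 (A x)) + β * (w2.1 x + l2 (A x)) =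
              (α * w1.1 x + β * w2.1 x + 0) + (α * l1 (A x) + β * l2 (A x))
            ring
          · show α * (w1.2 + T1) + β * (w2.2 + T2) =
              (α * w1.2 + β * w2.2 + (α * T1 + β * T2 - tl)) + tl
            ring
        rw [heqp]
        exact Set.add_mem_add hwmem hcmem
      obtain ⟨φ, u, h1, h2⟩ :=
        geometric_hahn_banach_point_closed hconv.closure isClosed_closure hncl
      have hφ0 : φ ((0 : WeakDual ℝ X), (0 : ℝ)) = 0 := by
        have e : ((0 : WeakDual ℝ X), (0 : ℝ)) = (0 : WeakDual ℝ X × ℝ) := rfl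
        rw [e, map_zero]
      have hupos : 0 < u := by rw [hφ0] at h1; exact h1
      obtain ⟨x0, hx0⟩ := weakdual_repr (φ.comp (ContinuousLinearMap.inl ℝ (WeakDual ℝ X) ℝ))
      set cφ := φ ((0 : WeakDual ℝ X), (1 : ℝ)) with hcφ
      have hrep : ∀ (w : WeakDual ℝ X) (r : ℝ), φ (w, r) = w x0 + r * cφ := by
        intro w r
        rw [wprod_decomp φ w r, hx0 w]
      have hall : ∀ (a1 : WeakDual ℝ X) (a2 : ℝ), (a1, a2) ∈ epif →
          ∀ (b1 : WeakDual ℝ X) (b2 : ℝ), (b1, b2) ∈ EpiC →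
          ∀ (l : Y →L[ℝ] ℝ), BddAbove ((fun y => l y) '' D) →
          u < a1 x0 + b1 x0 + l (A x0) +
            (a2 + b2 + sSup ((fun y => l y) '' D)) * cφ := by
        intro a1 a2 ha b1 b2 hb l hbdd
        have hcmem : ((toWeakDual (l.comp A)), sSup ((fun y => l y) '' D)) ∈ Lam :=
          ⟨l, hbdd, rfl⟩
        have hm := hmem3 (a1, a2) (b1, b2) _ ha hb hcmem
        have h2' := h2 _ (subset_closure hm)
        have hsumeq : (a1, a2) + ((b1, b2) +
            ((toWeakDual (l.comp A)), sSup ((fun y => l y) '' D))) =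
            ((a1 + (b1 + toWeakDual (l.comp A))),
              (a2 + (b2 + sSup ((fun y => l y) '' D)))) := rfl
        rw [hsumeq, hrep] at h2'
        have eapp : (a1 + (b1 + toWeakDual (l.comp A))) x0 =
            a1 x0 + (b1 x0 + l (A x0)) := rfl
        rw [eapp] at h2'
        linarith [h2']
      have hcnn : 0 ≤ cφ := by
        refine scale_nonneg (u := u) (B := u0 x0 + r0 * cφ) (α := cφ) fun n hn => ?_
        have hamem : ((u0 : WeakDual ℝ X), r0 + n) ∈ epif := by
          rw [hepif]
          intro v hv
          have := hu0 v hv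
          show u0 v - f v ≤ r0 + n
          linarith
        have h := hall u0 (r0 + n) hamem 0 0 hzeroC 0 hbdd0
        have e0 : (0 : WeakDual ℝ X) x0 = 0 := rfl
        have e0' : (0 : Y →L[ℝ] ℝ) (A x0) = 0 := rfl
        rw [e0, e0', hsSup0] at h
        change u < u0 x0 + 0 + 0 + (r0 + n + 0 + 0) * cφ at h
        linarith [h]
      rcases hcnn.lt_or_eq with hcpos | hczero
      · set z := -(cφ⁻¹) • x0 with hz
        have hzC : z ∈ C := by
          refine mem_of_all_halfspaces hCcl hCconv fun v s hvs => ?_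
          have hkey : 0 ≤ v x0 + s * cφ := by
            refine scale_nonneg (u := u) (B := u0 x0 + r0 * cφ) fun τ hτ => ?_
            have hbmem : ((τ • (v : WeakDual ℝ X), τ * s)) ∈ EpiC := by
              intro x hx
              show (τ • (v : WeakDual ℝ X)) x ≤ τ * s
              have e : (τ • (v : WeakDual ℝ X)) x = τ * v x := rfl
              rw [e]
              exact mul_le_mul_of_nonneg_left (hvs x hx) hτ
            have h := hall u0 r0 hu0' (τ • (v : WeakDual ℝ X)) (τ * s) hbmem 0 hbdd0
            have ev : (τ • (v : WeakDual ℝ X)) x0 = τ * v x0 := rfl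
            have e0' : (0 : Y →L[ℝ] ℝ) (A x0) = 0 := rfl
            change u < u0 x0 + τ * v x0 + (0 : Y →L[ℝ] ℝ) (A x0) + (r0 + τ * s + sSup ((fun y => (0 : Y →L[ℝ] ℝ) y) '' D)) * cφ at h
            rw [e0', hsSup0] at h
            linarith [h]
          have hvz : v z = -(cφ⁻¹) * v x0 := by
            rw [hz, map_smul, smul_eq_mul]
          rw [hvz]
          have hmul := mul_le_mul_of_nonneg_left hkey (inv_nonneg.mpr hcpos.le)
          have hsc : s * (cφ⁻¹ * cφ) = s := by
            rw [inv_mul_cancel₀ hcpos.ne', mul_one]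
          linarith [hmul, hsc]
        have hzD : A z ∈ D := by
          refine mem_of_all_halfspaces hDcl hDconv fun l s hls => ?_
          have hkey : 0 ≤ l (A x0) + s * cφ := by
            refine scale_nonneg (u := u) (B := u0 x0 + r0 * cφ) fun τ hτ => ?_
            have hub : ∀ d ∈ D, (τ • l) d ≤ τ * s := by
              intro d hd
              have e : (τ • l) d = τ * l d := rfl
              rw [e]
              exact mul_le_mul_of_nonneg_left (hls d hd) hτ
            obtain ⟨hbddτ, hleτ⟩ := hLmem (τ • l) (τ * s) hub
            have h := hall u0 r0 hu0' 0 0 hzeroC (τ • l) hbddτ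
            have ev : (τ • l) (A x0) = τ * l (A x0) := rfl
            have e0 : (0 : WeakDual ℝ X) x0 = 0 := rfl
            rw [ev, e0] at h
            change u < u0 x0 + 0 + τ * l (A x0) + (r0 + 0 + sSup ((fun y => (τ • l) y) '' D)) * cφ at h
            linarith [h, mul_le_mul_of_nonneg_right hleτ hcnn]
          have hAz : A z = -(cφ⁻¹) • (A x0) := by rw [hz, map_smul]
          have hlz : l (A z) = -(cφ⁻¹) * l (A x0) := by
            rw [hAz, map_smul, smul_eq_mul]
          rw [hlz]
          have hmul := mul_le_mul_of_nonneg_left hkey (inv_nonneg.mpr hcpos.le)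
          have hsc : s * (cφ⁻¹ * cφ) = s := by
            rw [inv_mul_cancel₀ hcpos.ne', mul_one]
          linarith [hmul, hsc]
        have hzS : z ∈ S ∧ f z ≤ -u / cφ := by
          refine biconj_le hf hlsc hbS z (-u / cφ) fun u' r hu'r => ?_
          have hamem : ((u' : WeakDual ℝ X), r) ∈ epif := by
            rw [hepif]
            intro v hv
            exact hu'r v hv
          have h := hall u' r hamem 0 0 hzeroC 0 hbdd0
          have e0 : (0 : WeakDual ℝ X) x0 = 0 := rfl
          have e0' : (0 : Y →L[ℝ] ℝ) (A x0) = 0 := rfl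
          rw [e0, e0', hsSup0] at h
          change u < u' x0 + 0 + 0 + (r + 0 + 0) * cφ at h
          have hlt : u < u' x0 + r * cφ := by linarith [h]
          have hu'z : u' z = -(cφ⁻¹) * u' x0 := by
            rw [hz, map_smul, smul_eq_mul]
          rw [hu'z]
          have hmul := mul_le_mul_of_nonneg_left hlt.le (inv_nonneg.mpr hcpos.le)
          have hrc : r * (cφ⁻¹ * cφ) = r := by
            rw [inv_mul_cancel₀ hcpos.ne', mul_one]
          have hdiv : -u / cφ = -(cφ⁻¹ * u) := by
            rw [neg_div, div_eq_inv_mul]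
          rw [hdiv]
          linarith [hmul, hrc]
        obtain ⟨hzS', hfz⟩ := hzS
        have hge := hprimal z ⟨⟨hzC, hzD⟩, hzS'⟩
        have hneg : -u / cφ < 0 := div_neg_of_neg_of_pos (by linarith) hcpos
        linarith
      · set t : ℝ := max 0 (f xb / u + 1) with htdef
        have htnn : 0 ≤ t := le_max_left _ _
        have htu : f xb < t * u := by
          have h4 : f xb / u + 1 ≤ t := le_max_right _ _
          have h5 := mul_le_mul_of_nonneg_right h4 hupos.le
          rw [add_mul, div_mul_cancel₀ _ hupos.ne', one_mul] at h5
          linarith [h5]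
        set z := xb - t • x0 with hz
        have hvC : ∀ (v : X →L[ℝ] ℝ) (s : ℝ), (∀ x ∈ C, v x ≤ s) → 0 ≤ v x0 := by
          intro v s hvs
          refine scale_nonneg (u := u) (B := u0 x0) fun τ hτ => ?_
          have hbmem : ((τ • (v : WeakDual ℝ X), τ * s)) ∈ EpiC := by
            intro x hx
            show (τ • (v : WeakDual ℝ X)) x ≤ τ * s
            have e : (τ • (v : WeakDual ℝ X)) x = τ * v x := rfl
            rw [e]
            exact mul_le_mul_of_nonneg_left (hvs x hx) hτ
          have h := hall u0 r0 hu0' (τ • (v : WeakDual ℝ X)) (τ * s) hbmem 0 hbdd0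
          rw [← hczero] at h
          have ev : (τ • (v : WeakDual ℝ X)) x0 = τ * v x0 := rfl
          have e0' : (0 : Y →L[ℝ] ℝ) (A x0) = 0 := rfl
          change u < u0 x0 + τ * v x0 + (0 : Y →L[ℝ] ℝ) (A x0) + (r0 + τ * s + sSup ((fun y => (0 : Y →L[ℝ] ℝ) y) '' D)) * 0 at h
          rw [e0'] at h
          linarith [h]
        have hlDkey : ∀ (l : Y →L[ℝ] ℝ) (s : ℝ), (∀ d ∈ D, l d ≤ s) → 0 ≤ l (A x0) := by
          intro l s hls
          refine scale_nonneg (u := u) (B := u0 x0) fun τ hτ => ?_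
          have hub : ∀ d ∈ D, (τ • l) d ≤ τ * s := by
            intro d hd
            have e : (τ • l) d = τ * l d := rfl
            rw [e]
            exact mul_le_mul_of_nonneg_left (hls d hd) hτ
          obtain ⟨hbddτ, hleτ⟩ := hLmem (τ • l) (τ * s) hub
          have h := hall u0 r0 hu0' 0 0 hzeroC (τ • l) hbddτ
          rw [← hczero] at h
          have ev : (τ • l) (A x0) = τ * l (A x0) := rfl
          have e0 : (0 : WeakDual ℝ X) x0 = 0 := rfl
          rw [ev, e0] at h
          change u < u0 x0 + 0 + τ * l (A x0) + (r0 + 0 + sSup ((fun y => (τ • l) y) '' D)) * 0 at h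
          linarith [h]
        have hzC : z ∈ C := by
          refine mem_of_all_halfspaces hCcl hCconv fun v s hvs => ?_
          have h0 := hvC v s hvs
          have e : v z = v xb - t * v x0 := by
            rw [hz, map_sub, map_smul, smul_eq_mul]
          rw [e]
          have := hvs xb hbC
          linarith [mul_nonneg htnn h0]
        have hzD : A z ∈ D := by
          refine mem_of_all_halfspaces hDcl hDconv fun l s hls => ?_
          have h0 := hlDkey l s hls
          have eA : A z = A xb - t • (A x0) := by rw [hz, map_sub, map_smul]
          have e : l (A z) = l (A xb) - t * l (A x0) := by
            rw [eA, map_sub, map_smul, smul_eq_mul]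
          rw [e]
          have := hls (A xb) hbD
          linarith [mul_nonneg htnn h0]
        have hzS : z ∈ S ∧ f z ≤ f xb - t * u := by
          refine biconj_le hf hlsc hbS z (f xb - t * u) fun u' r hu'r => ?_
          have hamem : ((u' : WeakDual ℝ X), r) ∈ epif := by
            rw [hepif]
            intro v hv
            exact hu'r v hv
          have h := hall u' r hamem 0 0 hzeroC 0 hbdd0
          rw [← hczero] at h
          have e0 : (0 : WeakDual ℝ X) x0 = 0 := rfl
          have e0' : (0 : Y →L[ℝ] ℝ) (A x0) = 0 := rfl
          rw [e0, e0'] at h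
          change u < u' x0 + 0 + 0 + (r + 0 + sSup ((fun y => (0 : Y →L[ℝ] ℝ) y) '' D)) * 0 at h
          have hlt : u < u' x0 := by linarith [h]
          have e : u' z = u' xb - t * u' x0 := by
            rw [hz, map_sub, map_smul, smul_eq_mul]
          rw [e]
          have hxbb := hu'r xb hbS
          have := mul_le_mul_of_nonneg_left hlt.le htnn
          linarith
        obtain ⟨hzS', hfz⟩ := hzS
        have hge := hprimal z ⟨⟨hzC, hzD⟩, hzS'⟩
        linarith
  constructor
  · intro hiff
    by_cases hcl : ((0 : WeakDual ℝ X), (0 : ℝ)) ∈ closure (epif + K)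
    · exact Or.inl (key1.mpr (hiff.mp (key2.mp hcl)))
    · exact Or.inr hcl
  · intro hor
    constructor
    · intro hL
      rcases hor with hmem | hncl
      · exact key1.mp hmem
      · exact absurd (key2.mpr hL) hncl
    · intro hR
      exact key2.mp (subset_closure (key1.mpr hR))
end

section
/- Let T be an index set, X a real normed space, (a'_t)_{t∈T} ⊆ X*, and α_t ≤ β_t reals. Define Λ := { Σ_t λ_t⁺ (a'_t, β_t) + Σ_t λ_t⁻ (−a'_t, −α_t) : λ ∈ ℝ^(T) } and N := cone({(a'_t, β_t) : t ∈ T} ∪ {(−a'_t, −α_t) : t ∈ T}) ⊆ X* × ℝ. Then Λ ⊆ N ⊆ Λ + {0} × ℝ≥0, and consequently N + {0} × ℝ≥0 = Λ + {0} × ℝ≥0. -/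
open Pointwise

/-- A convex cone: closed under addition and nonnegative scalar multiplication. -/
def IsConvexCone {Z : Type*} [AddCommGroup Z] [Module ℝ Z] (S : Set Z) : Prop :=
  (∀ a ∈ S, ∀ b ∈ S, a + b ∈ S) ∧ (∀ c : ℝ, 0 ≤ c → ∀ x ∈ S, c • x ∈ S)

lemma aux_max_sub (c : ℝ) : max c 0 - max (-c) 0 = c := by
  rcases le_total 0 c with h | h
  · rw [max_eq_left h, max_eq_right (neg_nonpos.mpr h)]; ring
  · rw [max_eq_right h, max_eq_left (neg_nonneg.mpr h)]; ring

lemma aux_subadd {a b : ℝ} (hab : a ≤ b) (c d : ℝ) :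
    max (c + d) 0 * b - max (-(c + d)) 0 * a ≤
      (max c 0 * b - max (-c) 0 * a) + (max d 0 * b - max (-d) 0 * a) := by
  have h1 : max c 0 = c + max (-c) 0 := by linarith [aux_max_sub c]
  have h2 : max d 0 = d + max (-d) 0 := by linarith [aux_max_sub d]
  have n1 : (0:ℝ) ≤ max (-c) 0 := le_max_right _ _
  have n2 : (0:ℝ) ≤ max (-d) 0 := le_max_right _ _
  rcases le_total 0 (c + d) with h | h
  · rw [max_eq_left h, max_eq_right (neg_nonpos.mpr h), h1, h2]
    nlinarith [mul_nonneg n1 (sub_nonneg.mpr hab), mul_nonneg n2 (sub_nonneg.mpr hab)]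
  · rw [max_eq_right h, max_eq_left (neg_nonneg.mpr h), h1, h2]
    nlinarith [mul_nonneg (by linarith [le_max_left (-c) 0, le_max_left (-d) 0] :
      (0:ℝ) ≤ max (-c) 0 + max (-d) 0 + c + d) (sub_nonneg.mpr hab)]

lemma aux_homog {a b c : ℝ} (hc : 0 ≤ c) (x : ℝ) :
    max (c * x) 0 * b - max (-(c * x)) 0 * a = c * (max x 0 * b - max (-x) 0 * a) := by
  have h1 : max (c * x) 0 = c * max x 0 := by
    rw [mul_max_of_nonneg _ _ hc, mul_zero]
  have h2 : max (-(c * x)) 0 = c * max (-x) 0 := by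
    rw [mul_max_of_nonneg _ _ hc, mul_zero, mul_neg]
  rw [h1, h2]; ring

lemma sum_mem_cone {Z : Type*} [AddCommGroup Z] [Module ℝ Z] {S : Set Z}
    (h : IsConvexCone S) (h0 : (0:Z) ∈ S) {ι : Type*} (s : Finset ι) (g : ι → Z)
    (hg : ∀ i ∈ s, g i ∈ S) : ∑ i ∈ s, g i ∈ S :=
  Finset.sum_induction g (· ∈ S) (fun a b ha hb => h.1 a ha b hb) h0 hg

/-- Proposition 4.2: with
`Λ = {(Σ_t λ_t a'_t, Σ_t (λ_t⁺ β_t − λ_t⁻ α_t)) : λ finitely supported}` and `N` the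
convex cone (containing the origin) generated by `{(a'_t, β_t)} ∪ {(−a'_t, −α_t)}`,
one has `Λ ⊆ N ⊆ Λ + {0} × ℝ≥0` and `N + {0} × ℝ≥0 = Λ + {0} × ℝ≥0`. -/
theorem second_moment_cone_vs_Lambda {T : Type*} {X : Type*}
    [NormedAddCommGroup X] [NormedSpace ℝ X]
    (a' : T → (X →L[ℝ] ℝ)) (α β : T → ℝ) (hαβ : ∀ t, α t ≤ β t)
    (Λ : Set ((X →L[ℝ] ℝ) × ℝ))
    (hΛ : Λ = {p | ∃ l : T →₀ ℝ,
        p = (l.sum fun t c => c • a' t,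
             l.sum fun t c => max c 0 * β t - max (-c) 0 * α t)})
    (N : Set ((X →L[ℝ] ℝ) × ℝ))
    (hNcone : IsConvexCone N) (hN0 : (0 : (X →L[ℝ] ℝ) × ℝ) ∈ N)
    (hNgen : (Set.range fun t => (a' t, β t)) ∪ (Set.range fun t => (-a' t, -α t)) ⊆ N)
    (hNmin : ∀ M : Set ((X →L[ℝ] ℝ) × ℝ), IsConvexCone M → (0 : (X →L[ℝ] ℝ) × ℝ) ∈ M →
        (Set.range fun t => (a' t, β t)) ∪ (Set.range fun t => (-a' t, -α t)) ⊆ M → N ⊆ M) :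
    Λ ⊆ N ∧ N ⊆ Λ + ({0} : Set (X →L[ℝ] ℝ)) ×ˢ Set.Ici (0 : ℝ) ∧
      N + ({0} : Set (X →L[ℝ] ℝ)) ×ˢ Set.Ici (0 : ℝ) =
        Λ + ({0} : Set (X →L[ℝ] ℝ)) ×ˢ Set.Ici (0 : ℝ) := by
  classical
  set S : Set ((X →L[ℝ] ℝ) × ℝ) := ({0} : Set (X →L[ℝ] ℝ)) ×ˢ Set.Ici (0 : ℝ) with hS
  -- membership in S
  have hSmem : ∀ r : ℝ, 0 ≤ r → ((0 : X →L[ℝ] ℝ), r) ∈ S := by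
    intro r hr
    exact Set.mk_mem_prod rfl hr
  -- abbreviation for the Λ-element of a finsupp
  set q : (T →₀ ℝ) → ((X →L[ℝ] ℝ) × ℝ) := fun l =>
    (l.sum fun t c => c • a' t,
     l.sum fun t c => max c 0 * β t - max (-c) 0 * α t) with hq
  have hqΛ : ∀ l : T →₀ ℝ, q l ∈ Λ := by
    intro l; rw [hΛ]; exact ⟨l, rfl⟩
  -- zero facts for the summed functions
  have hz1 : ∀ t : T, (0 : ℝ) • a' t = 0 := fun t => zero_smul ℝ _
  have hz2 : ∀ t : T, max (0:ℝ) 0 * β t - max (-(0:ℝ)) 0 * α t = 0 := by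
    intro t; simp
  -- Part 1 : Λ ⊆ N
  have hΛN : Λ ⊆ N := by
    rw [hΛ]
    rintro p ⟨l, rfl⟩
    have hrw : (l.sum fun t c => c • a' t,
        l.sum fun t c => max c 0 * β t - max (-c) 0 * α t)
        = ∑ t ∈ l.support,
            ((max (l t) 0) • (a' t, β t) + (max (-(l t)) 0) • (-a' t, -α t)) := by
      rw [Finsupp.sum, Finsupp.sum]
      rw [Prod.ext_iff]
      constructor
      · rw [Prod.fst_sum]
        refine Finset.sum_congr rfl fun t _ => ?_
        simp only [Prod.fst_add, Prod.smul_mk, smul_neg]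
        rw [← sub_eq_add_neg]
        conv_lhs => rw [← aux_max_sub (l t)]
        exact sub_smul (max (l t) 0) (max (-l t) 0) (a' t)
      · rw [Prod.snd_sum]
        refine Finset.sum_congr rfl fun t _ => ?_
        simp only [Prod.snd_add, Prod.smul_mk, smul_eq_mul]
        ring
    rw [hrw]
    refine sum_mem_cone hNcone hN0 _ _ fun t _ => hNcone.1 _ ?_ _ ?_
    · exact hNcone.2 _ (le_max_right _ _) _ (hNgen (Or.inl ⟨t, rfl⟩))
    · exact hNcone.2 _ (le_max_right _ _) _ (hNgen (Or.inr ⟨t, rfl⟩))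
  -- Part 2 : N ⊆ Λ + S
  have hMcone : IsConvexCone (Λ + S) := by
    constructor
    · rintro p ⟨x, hx, y, hy, rfl⟩ p' ⟨x', hx', y', hy', rfl⟩
      rw [hΛ] at hx hx'
      obtain ⟨l, rfl⟩ := hx
      obtain ⟨l', rfl⟩ := hx'
      obtain ⟨hy1, hy2⟩ := hy
      obtain ⟨hy1', hy2'⟩ := hy'
      -- rewrite sums over a common support
      have hsub : (l + l').support ⊆ l.support ∪ l'.support := Finsupp.support_add
      have e1 : ((l + l').sum fun t c => c • a' t)
          = (l.sum fun t c => c • a' t) + (l'.sum fun t c => c • a' t) :=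
        Finsupp.sum_add_index' hz1 (fun t c d => add_smul c d (a' t))
      have e2 : ((l + l').sum fun t c => max c 0 * β t - max (-c) 0 * α t)
          ≤ (l.sum fun t c => max c 0 * β t - max (-c) 0 * α t)
            + (l'.sum fun t c => max c 0 * β t - max (-c) 0 * α t) := by
        rw [Finsupp.sum_of_support_subset _ hsub _ (fun t _ => hz2 t),
            Finsupp.sum_of_support_subset _ Finset.subset_union_left _ (fun t _ => hz2 t),
            Finsupp.sum_of_support_subset _ Finset.subset_union_right _ (fun t _ => hz2 t),
            ← Finset.sum_add_distrib]
        refine Finset.sum_le_sum fun t _ => ?_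
        rw [Finsupp.add_apply]
        exact aux_subadd (hαβ t) (l t) (l' t)
      refine ⟨q (l + l'), hqΛ _,
        (0, (y + y').2 + (((l.sum fun t c => max c 0 * β t - max (-c) 0 * α t)
            + (l'.sum fun t c => max c 0 * β t - max (-c) 0 * α t))
          - ((l + l').sum fun t c => max c 0 * β t - max (-c) 0 * α t))), ?_, ?_⟩
      · refine hSmem _ ?_
        have : (0:ℝ) ≤ (y + y').2 := by
          simp only [Prod.snd_add]
          exact add_nonneg hy2 hy2'
        linarith
      · simp only [hq]
        rw [Prod.ext_iff]
        constructor
        · simp only [Prod.fst_add, e1]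
          have : y.1 = 0 := hy1
          have h' : y'.1 = 0 := hy1'
          simp [this, h']
        · simp only [Prod.snd_add]
          ring
    · rintro c hc p ⟨x, hx, y, hy, rfl⟩
      rw [hΛ] at hx
      obtain ⟨l, rfl⟩ := hx
      obtain ⟨hy1, hy2⟩ := hy
      have e1 : ((c • l).sum fun t x => x • a' t) = c • (l.sum fun t x => x • a' t) := by
        rw [Finsupp.sum_smul_index hz1, Finsupp.smul_sum]
        exact Finsupp.sum_congr fun t _ => (mul_smul c (l t) (a' t))
      have e2 : ((c • l).sum fun t x => max x 0 * β t - max (-x) 0 * α t)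
          = c * (l.sum fun t x => max x 0 * β t - max (-x) 0 * α t) := by
        rw [Finsupp.sum_smul_index (fun t => hz2 t), Finsupp.mul_sum]
        exact Finsupp.sum_congr fun t _ => aux_homog hc (l t)
      refine ⟨q (c • l), hqΛ _, (0, c * y.2), hSmem _ (mul_nonneg hc hy2), ?_⟩
      simp only [hq]
      rw [Prod.ext_iff]
      constructor
      · simp only [Prod.fst_add, Prod.smul_fst, e1]
        have : y.1 = 0 := hy1
        simp [this]
      · simp only [Prod.snd_add, Prod.smul_snd, e2, smul_eq_mul]
        ring
  have hM0 : (0 : (X →L[ℝ] ℝ) × ℝ) ∈ Λ + S := by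
    refine ⟨q 0, hqΛ 0, (0, 0), hSmem 0 le_rfl, ?_⟩
    simp only [hq]
    simp [Finsupp.sum_zero_index]
  have hMgen : (Set.range fun t => (a' t, β t)) ∪ (Set.range fun t => (-a' t, -α t))
      ⊆ Λ + S := by
    rintro p (⟨t, rfl⟩ | ⟨t, rfl⟩)
    · refine ⟨q (Finsupp.single t 1), hqΛ _, (0, 0), hSmem 0 le_rfl, ?_⟩
      simp only [hq]
      rw [Finsupp.sum_single_index (hz1 t), Finsupp.sum_single_index (hz2 t)]
      norm_num
    · refine ⟨q (Finsupp.single t (-1)), hqΛ _, (0, 0), hSmem 0 le_rfl, ?_⟩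
      simp only [hq]
      rw [Finsupp.sum_single_index (hz1 t), Finsupp.sum_single_index (hz2 t)]
      norm_num
      exact neg_one_smul ℝ (a' t)
  have hNM : N ⊆ Λ + S := hNmin _ hMcone hM0 hMgen
  refine ⟨hΛN, hNM, ?_⟩
  apply Set.Subset.antisymm
  · have hSS : S + S ⊆ S := by
      rintro p ⟨y, ⟨hy1, hy2⟩, z, ⟨hz1', hz2'⟩, rfl⟩
      constructor
      · simp only [Prod.fst_add]
        simp [Set.mem_singleton_iff.mp hy1, Set.mem_singleton_iff.mp hz1']
      · exact add_nonneg (Set.mem_Ici.mp hy2) (Set.mem_Ici.mp hz2')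
    calc N + S ⊆ (Λ + S) + S := Set.add_subset_add_right hNM
      _ = Λ + (S + S) := add_assoc _ _ _
      _ ⊆ Λ + S := Set.add_subset_add_left hSS
  · exact Set.add_subset_add_right hΛN
end

section
/- Let X, Y be real normed spaces, A : X → Y continuous linear, C ⊆ X and D ⊆ Y nonempty closed convex sets, f : X → ℝ ∪ {+∞} proper lsc convex, and B := A⁻¹(D). Then epi f* + K ⊆ epi (f + δ_{B∩C})*, where K := epi σ_C + {(A*λ, σ_D(λ)) : σ_D(λ) < ∞}; consequently, the weak-* closure of epi f* + K is contained in epi (f + δ_{B∩C})*. -/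
open Pointwise

/-- Lemma 6.3: `epi f* + K ⊆ epi (f + δ_{B∩C})*`, hence the weak-* closure of
`epi f* + K` is also contained in `epi (f + δ_{B∩C})*`, where `B = A⁻¹(D)` and
`K = epi σ_C + Λ`.  The proper lsc convex `f` is modelled by its effective domain `S`
and a real-valued `f` convex on `S` with closed epigraph. -/
theorem epi_conj_add_K_subset {X Y : Type*}
    [NormedAddCommGroup X] [NormedSpace ℝ X] [NormedAddCommGroup Y] [NormedSpace ℝ Y]
    (A : X →L[ℝ] Y) (C : Set X) (D : Set Y)
    (hCne : C.Nonempty) (hCcl : IsClosed C) (hCconv : Convex ℝ C)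
    (hDne : D.Nonempty) (hDcl : IsClosed D) (hDconv : Convex ℝ D)
    (S : Set X) (f : X → ℝ) (hSne : S.Nonempty) (hf : ConvexOn ℝ S f)
    (hlsc : IsClosed {p : X × ℝ | p.1 ∈ S ∧ f p.1 ≤ p.2})
    (epif K E : Set (WeakDual ℝ X × ℝ))
    (hepif : epif = {p : WeakDual ℝ X × ℝ | ∀ v ∈ S, p.1 v - f v ≤ p.2})
    (hK : K = {p : WeakDual ℝ X × ℝ | ∀ x ∈ C, p.1 x ≤ p.2}
        + {p : WeakDual ℝ X × ℝ | ∃ l : Y →L[ℝ] ℝ, BddAbove ((fun y => l y) '' D) ∧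
            p = (toWeakDual (l.comp A), sSup ((fun y => l y) '' D))})
    (hE : E = {p : WeakDual ℝ X × ℝ | ∀ x ∈ A ⁻¹' D ∩ C ∩ S, p.1 x - f x ≤ p.2}) :
    epif + K ⊆ E ∧ closure (epif + K) ⊆ E := by
  have hsub : epif + K ⊆ E := by
    rintro p hp
    rw [hK] at hp
    obtain ⟨q, hq, rs, hrs, rfl⟩ := hp
    obtain ⟨r, hr, s, hs, rfl⟩ := hrs
    obtain ⟨l, hbdd, rfl⟩ := hs
    rw [hepif] at hq
    rw [hE]
    rintro x ⟨⟨hxD, hxC⟩, hxS⟩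
    have h1 : q.1 x - f x ≤ q.2 := hq x hxS
    have h2 : r.1 x ≤ r.2 := hr x hxC
    have h3 : l (A x) ≤ sSup ((fun y => l y) '' D) :=
      le_csSup hbdd ⟨A x, hxD, rfl⟩
    show (q.1 + (r.1 + toWeakDual (l.comp A))) x - f x
        ≤ q.2 + (r.2 + sSup ((fun y => l y) '' D))
    have : (q.1 + (r.1 + toWeakDual (l.comp A))) x = q.1 x + (r.1 x + l (A x)) := rfl
    rw [this]
    linarith
  have hEcl : IsClosed E := by
    rw [hE]
    have : {p : WeakDual ℝ X × ℝ | ∀ x ∈ A ⁻¹' D ∩ C ∩ S, p.1 x - f x ≤ p.2}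
        = ⋂ x ∈ A ⁻¹' D ∩ C ∩ S, {p : WeakDual ℝ X × ℝ | p.1 x - f x ≤ p.2} := by
      ext p; simp
    rw [this]
    refine isClosed_biInter fun x _ => isClosed_le ?_ continuous_snd
    exact ((WeakDual.eval_continuous x).comp continuous_fst).sub continuous_const
  exact ⟨hsub, (hEcl.closure_subset_iff).2 hsub⟩
end

section
/- Let X, Y be real normed spaces, A : X → Y continuous linear, C ⊆ X and D ⊆ Y nonempty closed convex sets, f : X → ℝ ∪ {+∞} proper lsc convex, and x̄ ∈ C ∩ A⁻¹(D) ∩ dom f. If there exist u', v' ∈ X* and λ ∈ Y* with u' + v' = −A*λ and f*(u') + σ_C(v') + σ_D(λ) ≤ −f(x̄), then u' ∈ ∂f(x̄), v' ∈ N(C, x̄), λ ∈ N(D, A x̄), and 0 ∈ ∂f(x̄) + N(C, x̄) + A*(N(D, A x̄)); moreover, this inclusion implies x̄ is a minimizer of f over C ∩ A⁻¹(D). -/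
/-- Proposition 6.1 (optimality conditions), implications (ii) ⇒ (iii) ⇒ (i).
The proper lsc convex `f : X → ℝ ∪ {+∞}` is modelled by its effective domain `S` and a
real-valued `f` convex on `S` with closed epigraph.  If `u' + v' = −A*λ` and
`f*(u') + σ_C(v') + σ_D(λ) ≤ −f(x̄)` (encoded via real bounds `r, s, t`), then
`u' ∈ ∂f(x̄)`, `v' ∈ N(C, x̄)`, `λ ∈ N(D, A x̄)` and
`0 ∈ ∂f(x̄) + N(C, x̄) + A*(N(D, A x̄))`; moreover the latter inclusion implies that `x̄`
minimizes `f` over `C ∩ A⁻¹(D)`. -/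
theorem optimality_conditions {X Y : Type*}
    [NormedAddCommGroup X] [NormedSpace ℝ X] [NormedAddCommGroup Y] [NormedSpace ℝ Y]
    (A : X →L[ℝ] Y) (C : Set X) (D : Set Y)
    (hCne : C.Nonempty) (hCcl : IsClosed C) (hCconv : Convex ℝ C)
    (hDne : D.Nonempty) (hDcl : IsClosed D) (hDconv : Convex ℝ D)
    (S : Set X) (f : X → ℝ) (hSne : S.Nonempty) (hf : ConvexOn ℝ S f)
    (hlsc : IsClosed {p : X × ℝ | p.1 ∈ S ∧ f p.1 ≤ p.2})
    (xb : X) (hxb : xb ∈ C ∩ A ⁻¹' D ∩ S)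
    (u' v' : X →L[ℝ] ℝ) (l : Y →L[ℝ] ℝ)
    (hsum : u' + v' = -(l.comp A))
    (hineq : ∃ r s t : ℝ, (∀ v ∈ S, u' v - f v ≤ r) ∧ (∀ x ∈ C, v' x ≤ s) ∧
        (∀ d ∈ D, l d ≤ t) ∧ r + s + t ≤ -f xb) :
    ((∀ x ∈ S, f xb + u' (x - xb) ≤ f x) ∧
     (∀ x ∈ C, v' (x - xb) ≤ 0) ∧
     (∀ y ∈ D, l (y - A xb) ≤ 0) ∧
     (∃ (p q : X →L[ℝ] ℝ) (μ : Y →L[ℝ] ℝ),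
        (∀ x ∈ S, f xb + p (x - xb) ≤ f x) ∧
        (∀ x ∈ C, q (x - xb) ≤ 0) ∧
        (∀ y ∈ D, μ (y - A xb) ≤ 0) ∧
        p + q + μ.comp A = 0)) ∧
    ((∃ (p q : X →L[ℝ] ℝ) (μ : Y →L[ℝ] ℝ),
        (∀ x ∈ S, f xb + p (x - xb) ≤ f x) ∧
        (∀ x ∈ C, q (x - xb) ≤ 0) ∧
        (∀ y ∈ D, μ (y - A xb) ≤ 0) ∧
        p + q + μ.comp A = 0) →
      ∀ x ∈ C ∩ A ⁻¹' D ∩ S, f xb ≤ f x) := by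
  obtain ⟨⟨hxC, hxD⟩, hxS⟩ := hxb
  obtain ⟨r, s, t, hr, hs, ht, hsum2⟩ := hineq
  have hzero : u' xb + v' xb + l (A xb) = 0 := by
    have := congrArg (fun g : X →L[ℝ] ℝ => g xb) hsum
    simp at this; linarith
  have h1 : u' xb - f xb ≤ r := hr xb hxS
  have h2 : v' xb ≤ s := hs xb hxC
  have h3 : l (A xb) ≤ t := ht (A xb) hxD
  have e1 : u' xb - f xb = r := by linarith
  have e2 : v' xb = s := by linarith
  have e3 : l (A xb) = t := by linarith
  have hsub : ∀ x ∈ S, f xb + u' (x - xb) ≤ f x := by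
    intro x hx
    have := hr x hx
    simp only [map_sub]; linarith
  have hNC : ∀ x ∈ C, v' (x - xb) ≤ 0 := by
    intro x hx
    have := hs x hx
    simp only [map_sub]; linarith
  have hND : ∀ y ∈ D, l (y - A xb) ≤ 0 := by
    intro y hy
    have := ht y hy
    simp only [map_sub]; linarith
  refine ⟨⟨hsub, hNC, hND, u', v', l, hsub, hNC, hND, ?_⟩, ?_⟩
  · ext x; have := congrArg (fun g : X →L[ℝ] ℝ => g x) hsum; simp at this ⊢; linarith
  · rintro ⟨p, q, μ, hp, hq, hμ, heq⟩ x ⟨⟨hxC', hxD'⟩, hxS'⟩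
    have h0 : p (x - xb) + q (x - xb) + μ (A (x - xb)) = 0 := by
      have := congrArg (fun g : X →L[ℝ] ℝ => g (x - xb)) heq
      simpa using this
    have hμ' : μ (A (x - xb)) ≤ 0 := by
      have := hμ (A x) hxD'
      simpa [map_sub] using this
    have := hp x hxS'
    have hq' := hq x hxC'
    linarith
end
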